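/- arXiv:1510.07792 — 5 statements merged into one kernel-verified Lean document; each statement's English description precedes it below -/
import Mathlib

section
/- Let $\{a_k\}_{k\in\mathbb{Z}\setminus\{0\}}\in\ell^2$ and for each $n\in\mathbb{Z}$ let $z_n$ be a complex number with $z_n\notin\pi\mathbb{Z}$ and $\sup_n |z_n - \pi n| < \infty$ and $\inf_{k\ne n}|z_n - \pi k| \ge c > 0$. Then the sequence $s_n = \sum_{k\ne n} \frac{a_k}{z_n - \pi k}$ belongs to $\ell^2$, i.e. $\sum_{n\in\mathbb{Z}} |s_n|^2 < \infty$. -/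
noncomputable section
open MeasureTheory Complex AddCircle ComplexConjugate
open scoped ENNReal

local instance : Fact ((0:ℝ) < 1) := ⟨one_pos⟩

def Mb : UnitAddCircle → ℂ := fun x => ((periodizedBernoulli 1 x : ℝ) : ℂ)

lemma Mb_meas : Measurable Mb := by
  have : Mb = (fun y : ℝ => ((bernoulliFun 1 y : ℝ) : ℂ)) ∘ (Subtype.val) ∘ (measurableEquivIco 1 0) := by
    ext x; rfl
  rw [this]
  exact ((Complex.continuous_ofReal.comp (Polynomial.continuous _)).measurable).comp
    (measurable_subtype_coe.comp (measurableEquivIco 1 0).measurable)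

lemma Mb_bound (x : UnitAddCircle) : ‖Mb x‖ ≤ 1 := by
  have h : Mb x = ((bernoulliFun 1 ((AddCircle.equivIco (1:ℝ) 0 x : ℝ)) : ℝ) : ℂ) := rfl
  have hy : ((AddCircle.equivIco (1:ℝ) 0 x : ℝ)) ∈ Set.Ico (0:ℝ) (0+1) :=
    (AddCircle.equivIco (1:ℝ) 0 x).2
  rw [h, Complex.norm_real, bernoulliFun_one, Real.norm_eq_abs, abs_le]
  constructor <;> [linarith [hy.1]; linarith [hy.2]]

lemma Mb_coeff (j : ℤ) : fourierCoeff Mb j = -1 / (2 * Real.pi * I * j) := by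
  have := fourierCoeff_bernoulli_eq (k := 1) one_ne_zero j
  simp at this; exact this

lemma hilbert_key (a : ℤ → ℂ) (ha : Summable fun k => ‖a k‖ ^ 2) :
    Summable (fun n : ℤ =>
      ‖∑' k : ℤ, (-1 / (2 * Real.pi * I * ((n - k : ℤ) : ℂ))) * a k‖ ^ 2) := by
  have hmem : Memℓp a 2 := memℓp_gen (by
    have : ((2:ℝ≥0∞)).toReal = (2:ℕ) := by norm_num
    rw [this]
    simpa [Real.rpow_natCast] using ha)
  set A : lp (fun _ : ℤ => ℂ) 2 := ⟨a, hmem⟩ with hA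
  set f := (fourierBasis (T := (1:ℝ))).repr.symm A with hf
  have hrf : fourierBasis.repr f = A := fourierBasis.repr.apply_symm_apply A
  have hfM : MemLp (fun x => Mb x * (f : UnitAddCircle → ℂ) x) 2 haarAddCircle :=
    MemLp.of_le_mul (Lp.memLp f)
      (Mb_meas.aestronglyMeasurable.mul (Lp.aestronglyMeasurable f))
      (Filter.Eventually.of_forall fun x => by
        rw [norm_mul]
        exact mul_le_mul_of_nonneg_right (Mb_bound x) (norm_nonneg _))
  set F := hfM.toLp _ with hF
  have key : ∀ n : ℤ, fourierBasis.repr F n = ∑' k : ℤ, fourierCoeff Mb (n - k) * a k := by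
    intro n
    have hgmeas : AEStronglyMeasurable (fun x : UnitAddCircle => conj (Mb x) * fourier n x)
        haarAddCircle :=
      ((Complex.continuous_conj.measurable.comp Mb_meas).aestronglyMeasurable).mul
        (fourier n).continuous.aestronglyMeasurable
    have hu : MemLp (fun x : UnitAddCircle => conj (Mb x) * fourier n x) 2 haarAddCircle := by
      refine MemLp.of_bound hgmeas 1 (Filter.Eventually.of_forall fun x => ?_)
      rw [norm_mul, RCLike.norm_conj]
      have h2 : ‖fourier n x‖ = 1 := by
        rw [fourier_apply]; exact Circle.norm_coe _
      rw [h2, mul_one]; exact Mb_bound x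
    set u := hu.toLp _ with hu'
    have hrepru : ∀ k : ℤ, fourierBasis.repr u k = conj (fourierCoeff Mb (n - k)) := by
      intro k
      rw [fourierBasis_repr]
      have h1 : fourierCoeff (u : UnitAddCircle → ℂ) k
          = fourierCoeff (fun x : UnitAddCircle => conj (Mb x) * fourier n x) k := by
        simp only [fourierCoeff]
        refine integral_congr_ae ?_
        filter_upwards [hu.coeFn_toLp] with x hx
        rw [hx]
      rw [h1]
      simp only [fourierCoeff, smul_eq_mul]
      rw [← integral_conj]
      refine integral_congr_ae (Filter.Eventually.of_forall fun x => ?_)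
      simp only [map_mul]
      rw [← fourier_neg (n := -(n - k)), neg_neg,
        show n - k = -k + n by ring, fourier_add]
      ring
    have hinner : (inner ℂ u f : ℂ) = ∑' k : ℤ, fourierCoeff Mb (n - k) * a k := by
      rw [← fourierBasis.repr.inner_map_map u f, lp.inner_eq_tsum]
      refine tsum_congr fun k => ?_
      rw [RCLike.inner_apply, hrepru k, hrf]
      simp only [starRingEnd_apply, star_star]
      exact mul_comm _ _
    rw [← hinner, fourierBasis_repr]
    have h2 : fourierCoeff (F : UnitAddCircle → ℂ) n
        = fourierCoeff (fun x => Mb x * (f : UnitAddCircle → ℂ) x) n := by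
      simp only [fourierCoeff]
      refine integral_congr_ae ?_
      filter_upwards [hfM.coeFn_toLp] with x hx
      rw [hx]
    rw [h2, MeasureTheory.L2.inner_def]
    simp only [fourierCoeff, smul_eq_mul, RCLike.inner_apply]
    refine integral_congr_ae ?_
    filter_upwards [hu.coeFn_toLp] with x hx
    rw [hx, map_mul, ← fourier_neg (n := n)]
    simp only [starRingEnd_apply, star_star]
    ring
  have hsum : Summable fun n : ℤ => ‖fourierBasis.repr F n‖ ^ 2 := by
    have h1 := lp.memℓp (fourierBasis.repr F)
    have h2 := (memℓp_gen_iff (by norm_num : (0:ℝ) < ((2:ℝ≥0∞)).toReal)).mp h1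
    have : ((2:ℝ≥0∞)).toReal = (2:ℕ) := by norm_num
    rw [this] at h2
    simpa [Real.rpow_natCast] using h2
  refine hsum.congr fun n => ?_
  rw [key n]
  have : (∑' k : ℤ, fourierCoeff Mb (n - k) * a k)
      = ∑' k : ℤ, (-1 / (2 * Real.pi * I * ((n - k : ℤ) : ℂ))) * a k :=
    tsum_congr fun k => by rw [Mb_coeff]
  rw [this]

end


lemma summable_mul_of_sq {u v : ℤ → ℝ} (hu0 : ∀ k, 0 ≤ u k) (hv0 : ∀ k, 0 ≤ v k)
    (hu : Summable fun k => u k ^ 2) (hv : Summable fun k => v k ^ 2) :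
    Summable fun k => u k * v k := by
  refine Summable.of_nonneg_of_le (fun k => mul_nonneg (hu0 k) (hv0 k)) (fun k => ?_)
    ((hu.add hv).mul_left (1/2))
  nlinarith [sq_nonneg (u k - v k)]

lemma cs_tsum {f g : ℤ → ℝ} (hf : ∀ i, 0 ≤ f i) (hg : ∀ i, 0 ≤ g i)
    (hf2 : Summable fun i => f i ^ 2) (hg2 : Summable fun i => g i ^ 2) :
    (∑' i, f i * g i) ^ 2 ≤ (∑' i, f i ^ 2) * (∑' i, g i ^ 2) := by
  have hfg : Summable fun i => f i * g i := summable_mul_of_sq hf hg hf2 hg2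
  have hRnn : 0 ≤ (∑' i, f i ^ 2) * (∑' i, g i ^ 2) :=
    mul_nonneg (tsum_nonneg fun i => sq_nonneg _) (tsum_nonneg fun i => sq_nonneg _)
  have hb : ∀ s : Finset ℤ, ∑ i ∈ s, f i * g i
      ≤ Real.sqrt ((∑' i, f i ^ 2) * (∑' i, g i ^ 2)) := by
    intro s
    have h1 : (∑ i ∈ s, f i * g i) ^ 2 ≤ (∑ i ∈ s, f i ^ 2) * (∑ i ∈ s, g i ^ 2) :=
      Finset.sum_mul_sq_le_sq_mul_sq s f g
    have h2 : (∑ i ∈ s, f i ^ 2) ≤ ∑' i, f i ^ 2 :=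
      Summable.sum_le_tsum s (fun i _ => sq_nonneg _) hf2
    have h3 : (∑ i ∈ s, g i ^ 2) ≤ ∑' i, g i ^ 2 :=
      Summable.sum_le_tsum s (fun i _ => sq_nonneg _) hg2
    have h4 : 0 ≤ ∑ i ∈ s, f i * g i :=
      Finset.sum_nonneg fun i _ => mul_nonneg (hf i) (hg i)
    have h5 : (∑ i ∈ s, f i * g i) ^ 2 ≤ (∑' i, f i ^ 2) * (∑' i, g i ^ 2) := by
      refine h1.trans ?_
      have h6 : 0 ≤ ∑ i ∈ s, f i ^ 2 := Finset.sum_nonneg fun i _ => sq_nonneg _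
      have h7 : 0 ≤ ∑ i ∈ s, g i ^ 2 := Finset.sum_nonneg fun i _ => sq_nonneg _
      nlinarith
    calc ∑ i ∈ s, f i * g i = Real.sqrt ((∑ i ∈ s, f i * g i) ^ 2) :=
          (Real.sqrt_sq h4).symm
      _ ≤ Real.sqrt ((∑' i, f i ^ 2) * (∑' i, g i ^ 2)) := Real.sqrt_le_sqrt h5
  have hle := Summable.tsum_le_of_sum_le hfg hb
  have hnn : 0 ≤ ∑' i, f i * g i := tsum_nonneg fun i => mul_nonneg (hf i) (hg i)
  calc (∑' i, f i * g i) ^ 2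
      ≤ Real.sqrt ((∑' i, f i ^ 2) * (∑' i, g i ^ 2)) ^ 2 := by
        exact pow_le_pow_left₀ hnn hle 2
    _ = (∑' i, f i ^ 2) * (∑' i, g i ^ 2) := Real.sq_sqrt hRnn

lemma conv_summable {w b : ℤ → ℝ} (hw : ∀ j, 0 ≤ w j) (hb : ∀ k, 0 ≤ b k)
    (hws : Summable w) (hbs : Summable fun k => b k ^ 2) :
    Summable fun n : ℤ => (∑' k : ℤ, w (n - k) * b k) ^ 2 := by
  set S := ∑' j, w j with hS
  have hwn : ∀ n : ℤ, Summable fun k => w (n - k) := fun n =>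
    (Equiv.subLeft n).summable_iff.mpr hws
  have hwsum : ∀ n : ℤ, (∑' k, w (n - k)) = S := fun n => (Equiv.subLeft n).tsum_eq w
  have hprod : Summable fun p : ℤ × ℤ => w (p.1 - p.2) * b p.2 ^ 2 := by
    have h1 : Summable fun p : ℤ × ℤ => w p.1 * b p.2 ^ 2 :=
      hws.mul_of_nonneg hbs hw (fun k => sq_nonneg _)
    let e : ℤ × ℤ ≃ ℤ × ℤ :=
      { toFun := fun p => (p.1 + p.2, p.2), invFun := fun p => (p.1 - p.2, p.2),
        left_inv := fun p => by simp, right_inv := fun p => by simp }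
    refine (e.summable_iff (f := fun p : ℤ × ℤ => w (p.1 - p.2) * b p.2 ^ 2)).mp ?_
    refine h1.congr fun p => ?_
    simp [e, Function.comp]
  have hfac := (summable_prod_of_nonneg
    (fun p => mul_nonneg (hw _) (sq_nonneg _))).mp hprod
  refine Summable.of_nonneg_of_le (fun n => sq_nonneg _) (fun n => ?_)
    (hfac.2.mul_left S)
  have hg2s : Summable fun k => w (n - k) * b k ^ 2 := hfac.1 n
  have key := cs_tsum (f := fun k => Real.sqrt (w (n - k)))
    (g := fun k => Real.sqrt (w (n - k)) * b k)
    (fun k => Real.sqrt_nonneg _) (fun k => mul_nonneg (Real.sqrt_nonneg _) (hb k))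
    (by refine (hwn n).congr fun k => ?_; rw [Real.sq_sqrt (hw _)])
    (by refine hg2s.congr fun k => ?_; rw [mul_pow, Real.sq_sqrt (hw _)])
  have e1 : (∑' k, Real.sqrt (w (n - k)) * (Real.sqrt (w (n - k)) * b k))
      = ∑' k, w (n - k) * b k := by
    refine tsum_congr fun k => ?_
    rw [← mul_assoc, Real.mul_self_sqrt (hw _)]
  have e2 : (∑' k, Real.sqrt (w (n - k)) ^ 2) = S := by
    rw [← hwsum n]; exact tsum_congr fun k => Real.sq_sqrt (hw _)
  have e3 : (∑' k, (Real.sqrt (w (n - k)) * b k) ^ 2) = ∑' k, w (n - k) * b k ^ 2 := by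
    refine tsum_congr fun k => ?_
    rw [mul_pow, Real.sq_sqrt (hw _)]
  rw [e1, e2, e3] at key
  exact key

lemma summable_inv_sq_int : Summable fun j : ℤ => (((j : ℝ)) ^ 2)⁻¹ := by
  have := (Real.summable_one_div_int_pow (p := 2)).mpr one_lt_two
  simpa [one_div] using this

lemma summable_inv_sq_sub (n : ℤ) : Summable fun k : ℤ => (((n - k : ℤ) : ℝ) ^ 2)⁻¹ := by
  have h : Summable ((fun j : ℤ => (((j : ℝ)) ^ 2)⁻¹) ∘ (fun k : ℤ => n - k)) :=
    summable_inv_sq_int.comp_injective (sub_right_injective)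
  exact h.congr fun k => by push_cast [Function.comp]; ring_nf


section MainAux

lemma norm_pi_mul_int (j : ℤ) : ‖(Real.pi : ℂ) * (j : ℂ)‖ = Real.pi * |(j : ℝ)| := by
  rw [norm_mul, Complex.norm_real, Real.norm_eq_abs, abs_of_pos Real.pi_pos,
    show ((j : ℤ) : ℂ) = (((j : ℤ) : ℝ) : ℂ) by push_cast; ring,
    Complex.norm_real, Real.norm_eq_abs]

lemma split_frac (A Z P : ℂ) (hZ : Z ≠ 0) (hP : P ≠ 0) :
    A / Z = A * P⁻¹ + A * ((P - Z) / (Z * P)) := by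
  field_simp
  ring

end MainAux

open Real

theorem stmt_1 (a : ℤ → ℂ) (z : ℤ → ℂ) (B c : ℝ)
    (ha0 : a 0 = 0)
    (ha : Summable (fun k => ‖a k‖ ^ 2))
    (hz : ∀ n : ℤ, ∀ m : ℤ, z n ≠ (π : ℂ) * m)
    (hB : ∀ n : ℤ, ‖z n - (π : ℂ) * n‖ ≤ B)
    (hc : 0 < c)
    (hsep : ∀ n k : ℤ, k ≠ n → c ≤ ‖z n - (π : ℂ) * k‖) :
    Summable (fun n : ℤ =>
      ‖∑' k : {k : ℤ // k ≠ n}, a k / (z n - (π : ℂ) * (k : ℤ))‖ ^ 2) := by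
  have hpi : (0:ℝ) < π := Real.pi_pos
  have hB0 : (0:ℝ) ≤ B := le_trans (norm_nonneg _) (hB 0)
  set C : ℝ := B * (c + B) / (c * π ^ 2) with hC
  have hC0 : 0 ≤ C := by positivity
  set w : ℤ → ℝ := fun j => C * (((j : ℝ)) ^ 2)⁻¹ with hwdef
  have hw0 : ∀ j, 0 ≤ w j := fun j => by positivity
  have hws : Summable w := summable_inv_sq_int.mul_left C
  set g1 : ℤ → ℤ → ℂ := fun n k => a k * ((π : ℂ) * ((n - k : ℤ) : ℂ))⁻¹ with hg1def
  set g2 : ℤ → ℤ → ℂ := fun n k =>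
    a k * (((π : ℂ) * n - z n) /
      ((z n - (π : ℂ) * k) * ((π : ℂ) * ((n - k : ℤ) : ℂ)))) with hg2def
  -- separation lower bound
  have hlow : ∀ n k : ℤ, k ≠ n →
      c * π * |((n - k : ℤ) : ℝ)| ≤ ‖z n - (π : ℂ) * k‖ * (c + B) := by
    intro n k hk
    have h1 : c ≤ ‖z n - (π : ℂ) * k‖ := hsep n k hk
    have h3 : π * |((n - k : ℤ) : ℝ)| ≤ B + ‖z n - (π : ℂ) * k‖ := by
      rw [← norm_pi_mul_int]
      calc ‖(π : ℂ) * ((n - k : ℤ) : ℂ)‖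
          = ‖((π : ℂ) * n - z n) + (z n - (π : ℂ) * k)‖ := by
            congr 1; push_cast; ring
        _ ≤ ‖(π : ℂ) * n - z n‖ + ‖z n - (π : ℂ) * k‖ := norm_add_le _ _
        _ ≤ B + ‖z n - (π : ℂ) * k‖ :=
            add_le_add (by rw [norm_sub_rev]; exact hB n) le_rfl
    nlinarith [mul_le_mul_of_nonneg_left h3 hc.le,
      mul_nonneg hB0 (sub_nonneg.mpr h1)]
  -- kernel bound on g2
  have hker : ∀ n k : ℤ, ‖g2 n k‖ ≤ w (n - k) * ‖a k‖ := by
    intro n k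
    rcases eq_or_ne k n with rfl | hk
    · have hz0 : g2 k k = 0 := by simp [hg2def]
      rw [hz0, norm_zero]
      exact mul_nonneg (hw0 _) (norm_nonneg _)
    · have hD : c ≤ ‖z n - (π : ℂ) * k‖ := hsep n k hk
      have hDpos : (0:ℝ) < ‖z n - (π : ℂ) * k‖ := lt_of_lt_of_le hc hD
      have hj0 : n - k ≠ 0 := sub_ne_zero.mpr (Ne.symm hk)
      have hj : (1:ℝ) ≤ |((n - k : ℤ) : ℝ)| := by
        rw [← Int.cast_abs]
        exact_mod_cast Int.one_le_abs hj0
      have hjpos : (0:ℝ) < |((n - k : ℤ) : ℝ)| := lt_of_lt_of_le one_pos hj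
      have hnum : ‖(π : ℂ) * n - z n‖ ≤ B := by rw [norm_sub_rev]; exact hB n
      have hnorm : ‖g2 n k‖ = ‖a k‖ * (‖(π : ℂ) * n - z n‖ /
          (‖z n - (π : ℂ) * k‖ * (π * |((n - k : ℤ) : ℝ)|))) := by
        rw [hg2def]
        simp only []
        rw [norm_mul, norm_div, norm_mul, norm_pi_mul_int]
      rw [hnorm, mul_comm (w (n - k)) ‖a k‖]
      refine mul_le_mul_of_nonneg_left ?_ (norm_nonneg _)
      have hfin : ‖(π : ℂ) * n - z n‖ * (c * π ^ 2 * |((n - k : ℤ) : ℝ)| ^ 2)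
          ≤ B * (c + B) * (‖z n - (π : ℂ) * k‖ * (π * |((n - k : ℤ) : ℝ)|)) := by
        nlinarith [mul_le_mul_of_nonneg_left (hlow n k hk)
            (show (0:ℝ) ≤ B * (π * |((n - k : ℤ) : ℝ)|) by positivity),
          mul_le_mul_of_nonneg_right hnum
            (show (0:ℝ) ≤ c * π ^ 2 * |((n - k : ℤ) : ℝ)| ^ 2 by positivity)]
      have hcast : ((n - k : ℤ) : ℝ) ≠ 0 := Int.cast_ne_zero.mpr hj0
      have hwval : w (n - k) = (B * (c + B)) / (c * π ^ 2 * |((n - k : ℤ) : ℝ)| ^ 2) := by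
        rw [hwdef]
        simp only []
        rw [hC, _root_.sq_abs]
        field_simp
      rw [hwval, div_le_div_iff₀ (by positivity) (by positivity)]
      nlinarith [hfin]
  -- summability of inverse-square norms
  have hnormv : ∀ n : ℤ, Summable fun k : ℤ => ‖((π : ℂ) * ((n - k : ℤ) : ℂ))⁻¹‖ ^ 2 := by
    intro n
    refine Summable.of_nonneg_of_le (fun k => sq_nonneg _) (fun k => ?_)
      (summable_inv_sq_sub n)
    rcases eq_or_ne (n - k) 0 with h | h
    · simp [h]
    · have hj : (1:ℝ) ≤ |((n - k : ℤ) : ℝ)| := by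
        rw [← Int.cast_abs]; exact_mod_cast Int.one_le_abs h
      rw [norm_inv, norm_pi_mul_int, inv_pow]
      refine inv_anti₀ (by positivity) ?_
      rw [mul_pow, _root_.sq_abs]
      have hp2 : (1:ℝ) ≤ π ^ 2 := by nlinarith [Real.pi_gt_three]
      nlinarith [mul_le_mul_of_nonneg_right hp2 (sq_nonneg (((n - k : ℤ) : ℝ)))]
  have hg1s : ∀ n : ℤ, Summable (g1 n) := by
    intro n
    refine Summable.of_norm ?_
    have h := summable_mul_of_sq (u := fun k => ‖a k‖)
      (v := fun k => ‖((π : ℂ) * ((n - k : ℤ) : ℂ))⁻¹‖)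
      (fun k => norm_nonneg _) (fun k => norm_nonneg _) ha (hnormv n)
    exact h.congr fun k => (norm_mul _ _).symm
  have hwsq : ∀ n : ℤ, Summable fun k : ℤ => w (n - k) ^ 2 := by
    intro n
    refine Summable.of_nonneg_of_le (fun k => sq_nonneg _) (fun k => ?_)
      ((summable_inv_sq_sub n).mul_left (C ^ 2))
    rw [hwdef]
    simp only []
    rw [mul_pow]
    refine mul_le_mul_of_nonneg_left ?_ (sq_nonneg C)
    rcases eq_or_ne (n - k) 0 with h | h
    · simp [h]
    · have hj : (1:ℝ) ≤ ((n - k : ℤ) : ℝ) ^ 2 := by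
        have h3 : (1:ℝ) ≤ |((n - k : ℤ) : ℝ)| := by
          rw [← Int.cast_abs]; exact_mod_cast Int.one_le_abs h
        rw [← _root_.sq_abs]
        nlinarith [h3]
      have h1 : ((((n - k : ℤ) : ℝ)) ^ 2)⁻¹ ≤ 1 := inv_le_one_of_one_le₀ hj
      have h2 : (0:ℝ) ≤ ((((n - k : ℤ) : ℝ)) ^ 2)⁻¹ := by positivity
      nlinarith [mul_le_mul_of_nonneg_right h1 h2]
  have hconv : ∀ n : ℤ, Summable fun k : ℤ => w (n - k) * ‖a k‖ := fun n =>
    summable_mul_of_sq (fun k => hw0 _) (fun k => norm_nonneg _) (hwsq n) ha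
  have hg2norm : ∀ n : ℤ, Summable fun k : ℤ => ‖g2 n k‖ := fun n =>
    Summable.of_nonneg_of_le (fun k => norm_nonneg _) (hker n) (hconv n)
  have hg2s : ∀ n : ℤ, Summable (g2 n) := fun n => (hg2norm n).of_norm
  -- the majorization
  have hmaj : ∀ n : ℤ, ‖∑' k : {k : ℤ // k ≠ n}, a k / (z n - (π : ℂ) * (k : ℤ))‖
      ≤ ‖∑' k : ℤ, g1 n k‖ + ∑' k : ℤ, w (n - k) * ‖a k‖ := by
    intro n
    have hsplit : (∑' k : {k : ℤ // k ≠ n}, a k / (z n - (π : ℂ) * (k : ℤ)))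
        = (∑' k : {k : ℤ // k ≠ n}, g1 n (k : ℤ))
          + ∑' k : {k : ℤ // k ≠ n}, g2 n (k : ℤ) := by
      have hadd := Summable.tsum_add (f := fun k : {k : ℤ // k ≠ n} => g1 n (k : ℤ))
        (g := fun k : {k : ℤ // k ≠ n} => g2 n (k : ℤ))
        ((hg1s n).subtype _) ((hg2s n).subtype _)
      rw [← hadd]
      refine tsum_congr fun k => ?_
      have hk : (k : ℤ) ≠ n := k.2
      have hd1 : z n - (π : ℂ) * (k : ℤ) ≠ 0 := sub_ne_zero.mpr (hz n k)
      have hd2 : ((n - (k : ℤ) : ℤ) : ℂ) ≠ 0 :=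
        Int.cast_ne_zero.mpr (sub_ne_zero.mpr (Ne.symm hk))
      have hd3 : ((π : ℝ) : ℂ) ≠ 0 := Complex.ofReal_ne_zero.mpr Real.pi_ne_zero
      have e1 : a (k : ℤ) / (z n - (π : ℂ) * (k : ℤ)) = g1 n (k : ℤ) + g2 n (k : ℤ) := by
        rw [hg1def, hg2def]
        simp only []
        have hP : (π : ℂ) * ((n - (k : ℤ) : ℤ) : ℂ) ≠ 0 := mul_ne_zero hd3 hd2
        have hrw : (π : ℂ) * ((n : ℤ) : ℂ) - z n
            = ((π : ℂ) * ((n - (k : ℤ) : ℤ) : ℂ)) - (z n - (π : ℂ) * ((k : ℤ) : ℂ)) := by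
          push_cast; ring
        rw [hrw]
        exact split_frac _ _ _ hd1 hP
      exact e1
    have h1 : (∑' k : {k : ℤ // k ≠ n}, g1 n (k : ℤ)) = ∑' k : ℤ, g1 n k := by
      refine tsum_subtype_eq_of_support_subset ?_
      intro k hk
      rcases eq_or_ne k n with rfl | h
      · exfalso; apply hk; simp [hg1def]
      · exact h
    calc ‖∑' k : {k : ℤ // k ≠ n}, a k / (z n - (π : ℂ) * (k : ℤ))‖
        = ‖(∑' k : {k : ℤ // k ≠ n}, g1 n (k : ℤ))
            + ∑' k : {k : ℤ // k ≠ n}, g2 n (k : ℤ)‖ := by rw [hsplit]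
      _ ≤ ‖∑' k : {k : ℤ // k ≠ n}, g1 n (k : ℤ)‖
            + ‖∑' k : {k : ℤ // k ≠ n}, g2 n (k : ℤ)‖ := norm_add_le _ _
      _ ≤ ‖∑' k : ℤ, g1 n k‖ + ∑' k : ℤ, w (n - k) * ‖a k‖ := by
          refine add_le_add (le_of_eq (by rw [h1])) ?_
          calc ‖∑' k : {k : ℤ // k ≠ n}, g2 n (k : ℤ)‖
              ≤ ∑' k : {k : ℤ // k ≠ n}, ‖g2 n (k : ℤ)‖ :=
                norm_tsum_le_tsum_norm ((hg2norm n).subtype _)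
            _ ≤ ∑' k : {k : ℤ // k ≠ n}, w (n - (k : ℤ)) * ‖a (k : ℤ)‖ :=
                Summable.tsum_le_tsum (fun k => hker n k) ((hg2norm n).subtype _)
                  ((hconv n).subtype _)
            _ ≤ ∑' k : ℤ, w (n - k) * ‖a k‖ :=
                Summable.tsum_le_tsum_of_inj (fun k : {k : ℤ // k ≠ n} => (k : ℤ))
                  Subtype.coe_injective
                  (fun c _ => mul_nonneg (hw0 _) (norm_nonneg _))
                  (fun k => le_rfl) ((hconv n).subtype _) (hconv n)
  -- conclusion
  set Hn : ℤ → ℂ := fun n => ∑' k : ℤ, g1 n k with hHn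
  have hHsum : Summable fun n : ℤ => ‖Hn n‖ ^ 2 := by
    have hk := hilbert_key a ha
    have heq : ∀ n : ℤ, Hn n = (-2 * Complex.I) *
        ∑' k : ℤ, (-1 / (2 * Real.pi * Complex.I * ((n - k : ℤ) : ℂ))) * a k := by
      intro n
      rw [hHn]
      simp only []
      rw [← tsum_mul_left]
      refine tsum_congr fun k => ?_
      rw [hg1def]
      simp only []
      rcases eq_or_ne ((n - k : ℤ) : ℂ) 0 with h | h
      · rw [h]; simp
      · have hd3 : ((π : ℝ) : ℂ) ≠ 0 := Complex.ofReal_ne_zero.mpr Real.pi_ne_zero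
        have h2I : (2 * Complex.I : ℂ) ≠ 0 := by simp [Complex.I_ne_zero]
        have hconst : ((π : ℂ) * ((n - k : ℤ) : ℂ))⁻¹
            = (-2 * Complex.I) * (-1 / (2 * (π : ℂ) * Complex.I * ((n - k : ℤ) : ℂ))) := by
          rw [show (-2 * Complex.I : ℂ) * (-1 / (2 * (π : ℂ) * Complex.I * ((n - k : ℤ) : ℂ)))
              = (2 * Complex.I) / ((2 * Complex.I) * ((π : ℂ) * ((n - k : ℤ) : ℂ))) by ring,
            ← div_div, div_self h2I, one_div]
        rw [hconst]
        ring
    refine (hk.mul_left 4).congr fun n => ?_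
    rw [heq n, norm_mul, show ‖(-2 * Complex.I : ℂ)‖ = 2 by simp]
    ring
  have hCsum : Summable fun n : ℤ => (∑' k : ℤ, w (n - k) * ‖a k‖) ^ 2 :=
    conv_summable hw0 (fun k => norm_nonneg _) hws ha
  refine Summable.of_nonneg_of_le (fun n => sq_nonneg _) (fun n => ?_)
    ((hHsum.mul_left 2).add (hCsum.mul_left 2))
  have h := hmaj n
  have h0 : (0:ℝ) ≤ ‖∑' k : {k : ℤ // k ≠ n}, a k / (z n - (π : ℂ) * (k : ℤ))‖ :=
    norm_nonneg _
  nlinarith [sq_nonneg (‖Hn n‖ - ∑' k : ℤ, w (n - k) * ‖a k‖),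
    tsum_nonneg (L := SummationFilter.unconditional ℤ) (fun k : ℤ => mul_nonneg (hw0 (n - k)) (norm_nonneg (a k))),
    norm_nonneg (Hn n)]
end

section
/- Let $E(z) = \frac{(32 z^2 - 25\pi^2) i e^{-iz} - 7\pi^2 i e^{iz}}{32 (z^2 - \pi^2)}$. Then $E$ extends to an entire function (the singularities at $z = \pm\pi$ are removable), and every zero $z_0$ of $E$ satisfies $\operatorname{Im} z_0 < 0$. -/
open Real Complex

noncomputable def NN (z : ℂ) : ℂ :=
  Complex.I / 32 * ((32 * z ^ 2 - 25 * (π : ℂ) ^ 2) * Complex.exp (-Complex.I * z)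
    - 7 * (π : ℂ) ^ 2 * Complex.exp (Complex.I * z))

noncomputable def ND (z : ℂ) : ℂ :=
  Complex.I / 32 * ((64 * z - Complex.I * (32 * z ^ 2 - 25 * (π : ℂ) ^ 2)) * Complex.exp (-Complex.I * z)
    - 7 * (π : ℂ) ^ 2 * Complex.I * Complex.exp (Complex.I * z))

lemma exp_neg_I_pi : Complex.exp (-Complex.I * (π : ℂ)) = -1 := by
  rw [show -Complex.I * (π:ℂ) = -((π:ℂ) * Complex.I) by ring, Complex.exp_neg,
    Complex.exp_pi_mul_I]
  norm_num

lemma exp_I_pi : Complex.exp (Complex.I * (π : ℂ)) = -1 := by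
  rw [mul_comm, Complex.exp_pi_mul_I]

lemma NN_pi : NN (π : ℂ) = 0 := by
  simp only [NN, exp_neg_I_pi, exp_I_pi]
  ring

lemma NN_neg_pi : NN (-(π : ℂ)) = 0 := by
  simp only [NN, show -Complex.I * -(π:ℂ) = Complex.I * (π:ℂ) by ring,
    show Complex.I * -(π:ℂ) = -Complex.I * (π:ℂ) by ring, exp_neg_I_pi, exp_I_pi]
  ring

lemma hasDerivAt_NN (z : ℂ) : HasDerivAt NN (ND z) z := by
  have hid : HasDerivAt (fun w : ℂ => -Complex.I * w) (-Complex.I) z := by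
    simpa using (hasDerivAt_id z).const_mul (-Complex.I)
  have he1 := hid.cexp
  have hid2 : HasDerivAt (fun w : ℂ => Complex.I * w) Complex.I z := by
    simpa using (hasDerivAt_id z).const_mul Complex.I
  have he2 := hid2.cexp
  have hp : HasDerivAt (fun w : ℂ => 32 * w ^ 2 - 25 * (π : ℂ) ^ 2) (32 * (2 * z)) z := by
    simpa using ((hasDerivAt_pow 2 z).const_mul (32:ℂ)).sub_const (25 * (π:ℂ)^2)
  have h := ((hp.mul he1).sub (he2.const_mul (7 * (π:ℂ)^2))).const_mul (Complex.I / 32)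
  refine HasDerivAt.congr_deriv h ?_
  simp only [ND]; ring

noncomputable def EE : ℂ → ℂ := dslope (dslope NN (π : ℂ)) (-(π : ℂ))

lemma diff_NN : Differentiable ℂ NN := fun z => (hasDerivAt_NN z).differentiableAt

lemma diff_EE : Differentiable ℂ EE := by
  rw [← differentiableOn_univ]
  rw [EE, Complex.differentiableOn_dslope (Filter.univ_mem),
    Complex.differentiableOn_dslope (Filter.univ_mem)]
  exact diff_NN.differentiableOn

lemma neg_pi_ne : -(π : ℂ) ≠ (π : ℂ) := by
  intro h
  have : (2 * π : ℝ) = 0 := by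
    have := congrArg Complex.re h
    simp at this
    push_cast
    linarith
  simpa [Real.pi_ne_zero] using this

lemma EE_of_ne {z : ℂ} (h1 : z ≠ (π : ℂ)) (h2 : z ≠ -(π : ℂ)) :
    EE z = NN z / ((z - π) * (z + π)) := by
  rw [EE, dslope_of_ne _ h2, slope_def_field, dslope_of_ne _ h1, slope_def_field,
    dslope_of_ne _ neg_pi_ne, slope_def_field, NN_pi, NN_neg_pi]
  have h3 : z + (π:ℂ) ≠ 0 := fun h => h2 (by linear_combination h)
  have h4 : z - (π:ℂ) ≠ 0 := sub_ne_zero.2 h1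
  have h5 : -(π:ℂ) - (π:ℂ) ≠ 0 := sub_ne_zero.2 neg_pi_ne
  have h6 : z - -(π:ℂ) ≠ 0 := sub_ne_zero.2 h2
  field_simp
  ring

lemma ND_pi : ND (π : ℂ) = -(7 * (π:ℂ)^2 / 16) - 2 * (π:ℂ) * Complex.I := by
  simp only [ND, exp_neg_I_pi, exp_I_pi]
  linear_combination (7 * (π:ℂ)^2 / 16) * Complex.I_sq

lemma ND_neg_pi : ND (-(π : ℂ)) = -(7 * (π:ℂ)^2 / 16) + 2 * (π:ℂ) * Complex.I := by
  simp only [ND, show -Complex.I * -(π:ℂ) = Complex.I * (π:ℂ) from by ring,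
    show Complex.I * -(π:ℂ) = -Complex.I * (π:ℂ) from by ring, exp_neg_I_pi, exp_I_pi]
  linear_combination (7 * (π:ℂ)^2 / 16) * Complex.I_sq

lemma two_pi_ne : (2 : ℂ) * (π:ℂ) ≠ 0 := by
  simp [Real.pi_ne_zero]

lemma EE_pi : EE (π : ℂ) = ND (π : ℂ) / (2 * (π:ℂ)) := by
  rw [EE, dslope_of_ne _ (fun h => neg_pi_ne h.symm), slope_def_field, dslope_same,
    dslope_of_ne _ neg_pi_ne, slope_def_field, NN_pi, NN_neg_pi, (hasDerivAt_NN _).deriv]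
  ring

lemma EE_neg_pi : EE (-(π : ℂ)) = -ND (-(π:ℂ)) / (2 * (π:ℂ)) := by
  have hne : -(π:ℂ) - (π:ℂ) ≠ 0 := by
    rw [show -(π:ℂ) - (π:ℂ) = -(2 * (π:ℂ)) from by ring]
    simpa using two_pi_ne
  have hev : (dslope NN (π:ℂ)) =ᶠ[nhds (-(π:ℂ))] fun w => NN w / (w - (π:ℂ)) := by
    have hmem : {(π:ℂ)}ᶜ ∈ nhds (-(π:ℂ)) :=
      isOpen_compl_singleton.mem_nhds (by simpa using neg_pi_ne)
    filter_upwards [hmem] with w hw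
    rw [dslope_of_ne _ hw, slope_def_field, NN_pi, sub_zero]
  have hd : HasDerivAt (fun w => NN w / (w - (π:ℂ)))
      ((ND (-(π:ℂ)) * ((-(π:ℂ)) - (π:ℂ)) - NN (-(π:ℂ)) * 1) / ((-(π:ℂ)) - (π:ℂ))^2)
      (-(π:ℂ)) := (hasDerivAt_NN _).div ((hasDerivAt_id _).sub_const _) hne
  have hp : (π:ℂ) ≠ 0 := by simp [Real.pi_ne_zero]
  rw [EE, dslope_same, hev.deriv_eq, hd.deriv, NN_neg_pi]
  field_simp
  ring

lemma EE_pi_ne : EE (π : ℂ) ≠ 0 := by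
  rw [EE_pi, ND_pi]
  intro h
  rw [div_eq_zero_iff] at h
  rcases h with h | h
  · have := congrArg Complex.im h
    simp [← Complex.ofReal_pow, Real.pi_ne_zero] at this
  · exact two_pi_ne h

lemma EE_neg_pi_ne : EE (-(π : ℂ)) ≠ 0 := by
  rw [EE_neg_pi, ND_neg_pi]
  intro h
  rw [div_eq_zero_iff] at h
  rcases h with h | h
  · have := congrArg Complex.im h
    simp [← Complex.ofReal_pow, Real.pi_ne_zero] at this
  · exact two_pi_ne h

lemma key_eq {z : ℂ} (h1 : z ≠ (π:ℂ)) (h2 : z ≠ -(π:ℂ)) (hz : EE z = 0) :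
    32 * z ^ 2 - 25 * (π:ℂ) ^ 2 = 7 * (π:ℂ) ^ 2 * Complex.exp (2 * Complex.I * z) := by
  rw [EE_of_ne h1 h2, div_eq_zero_iff] at hz
  have hden : (z - (π:ℂ)) * (z + (π:ℂ)) ≠ 0 :=
    mul_ne_zero (sub_ne_zero.2 h1) (fun h => h2 (by linear_combination h))
  have hN : NN z = 0 := hz.resolve_right hden
  rw [NN] at hN
  have hI : Complex.I / 32 ≠ 0 := by simp [Complex.I_ne_zero]
  have h3 : (32 * z ^ 2 - 25 * (π:ℂ) ^ 2) * Complex.exp (-Complex.I * z)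
      = 7 * (π:ℂ) ^ 2 * Complex.exp (Complex.I * z) :=
    sub_eq_zero.mp ((mul_eq_zero.mp hN).resolve_left hI)
  have e1 : Complex.exp (-Complex.I * z) * Complex.exp (Complex.I * z) = 1 := by
    rw [← Complex.exp_add]
    simp [show -Complex.I * z + Complex.I * z = 0 from by ring]
  have e2 : Complex.exp (Complex.I * z) * Complex.exp (Complex.I * z)
      = Complex.exp (2 * Complex.I * z) := by
    rw [← Complex.exp_add]; ring_nf
  calc 32 * z ^ 2 - 25 * (π:ℂ) ^ 2
      = (32 * z ^ 2 - 25 * (π:ℂ) ^ 2) * (Complex.exp (-Complex.I * z) * Complex.exp (Complex.I * z)) := by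
        rw [e1, mul_one]
    _ = (7 * (π:ℂ) ^ 2 * Complex.exp (Complex.I * z)) * Complex.exp (Complex.I * z) := by
        rw [← mul_assoc, h3]
    _ = 7 * (π:ℂ) ^ 2 * Complex.exp (2 * Complex.I * z) := by rw [mul_assoc, e2]

lemma absKey {z : ℂ} (h : 32 * z ^ 2 - 25 * (π:ℂ) ^ 2 = 7 * (π:ℂ) ^ 2 * Complex.exp (2 * Complex.I * z)) :
    ‖(32 * z ^ 2 - 25 * (π:ℂ) ^ 2)‖ = 7 * π ^ 2 * Real.exp (-(2 * z.im)) := by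
  have habs := congrArg (‖·‖) h
  rw [habs]
  simp [norm_mul, norm_pow, Complex.norm_exp, Complex.norm_real, abs_of_pos Real.pi_pos,
    Complex.mul_re, Complex.mul_im]

lemma abs32 (z : ℂ) : ‖(32 * z ^ 2)‖ = 32 * (z.re * z.re + z.im * z.im) := by
  rw [norm_mul, norm_pow, Complex.sq_norm, Complex.normSq_apply]
  norm_num

lemma tri {z : ℂ} (h : 32 * z ^ 2 - 25 * (π:ℂ) ^ 2 = 7 * (π:ℂ) ^ 2 * Complex.exp (2 * Complex.I * z)) :
    32 * (z.re * z.re + z.im * z.im) ≤ 25 * π ^ 2 + 7 * π ^ 2 * Real.exp (-(2 * z.im)) := by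
  have h1 : ‖(32 * z ^ 2)‖ ≤
      ‖(32 * z ^ 2 - 25 * (π:ℂ) ^ 2)‖ + ‖(25 * (π:ℂ) ^ 2)‖ := by
    calc ‖(32 * z ^ 2)‖
        = ‖((32 * z ^ 2 - 25 * (π:ℂ) ^ 2) + 25 * (π:ℂ) ^ 2)‖ := by ring_nf
      _ ≤ _ := norm_add_le _ _
  rw [abs32, absKey h] at h1
  have h2 : ‖(25 * (π:ℂ) ^ 2)‖ = 25 * π ^ 2 := by
    simp [norm_mul, norm_pow, Complex.norm_real, abs_of_pos Real.pi_pos]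
  rw [h2] at h1
  linarith

set_option maxHeartbeats 1000000 in
lemma EE_zero_im {z : ℂ} (hz : EE z = 0) : z.im < 0 := by
  by_contra hy
  push_neg at hy
  by_cases hzp : z = (π:ℂ)
  · exact EE_pi_ne (hzp ▸ hz)
  by_cases hzm : z = -(π:ℂ)
  · exact EE_neg_pi_ne (hzm ▸ hz)
  have key := key_eq hzp hzm hz
  have hre := congrArg Complex.re key
  have him := congrArg Complex.im key
  simp [Complex.exp_re, Complex.exp_im, Complex.mul_re, Complex.mul_im, pow_two,
    ← Complex.ofReal_pow] at hre him
  have htri := tri key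
  set x := z.re with hx
  set y := z.im with hyy
  have hπ := Real.pi_pos
  have hs0 : (0:ℝ) < Real.exp (-(2*y)) := Real.exp_pos _
  have hc1 := Real.cos_le_one (2*x)
  have hc2 := Real.neg_one_le_cos (2*x)
  rcases eq_or_lt_of_le hy with hy0 | hy0
  · -- y = 0
    have him0 : 0 = 7*(π*π) * Real.sin (2*x) := by
      rw [← hy0] at him; simpa using him
    have hre0 : 32*(x*x) - 25*(π*π) = 7*(π*π) * Real.cos (2*x) := by
      rw [← hy0] at hre; simpa using hre
    have hsin : Real.sin (2*x) = 0 := by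
      rcases mul_eq_zero.mp him0.symm with h | h
      · nlinarith
      · exact h
    obtain ⟨n, hn⟩ := Real.sin_eq_zero_iff.mp hsin
    have hub : x*x ≤ π*π := by
      nlinarith [mul_nonneg (mul_pos hπ hπ).le (by linarith : (0:ℝ) ≤ 1 - Real.cos (2*x))]
    have hlb : 9/16*(π*π) ≤ x*x := by
      nlinarith [mul_nonneg (mul_pos hπ hπ).le (by linarith : (0:ℝ) ≤ 1 + Real.cos (2*x))]
    have hx2 : x = (n:ℝ)*π/2 := by linarith
    have hxx : x*x = (n:ℝ)^2*(π*π)/4 := by rw [hx2]; ring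
    have hn4 : ((n:ℝ))^2 ≤ 4 := by nlinarith [mul_pos hπ hπ]
    have h94 : (9:ℝ)/4 ≤ ((n:ℝ))^2 := by nlinarith [mul_pos hπ hπ]
    have hn4' : n^2 ≤ 4 := by exact_mod_cast hn4
    have hn3 : 3 ≤ n^2 := by
      by_contra h
      push_neg at h
      have h2 : n^2 ≤ 2 := by omega
      have : ((n:ℝ))^2 ≤ 2 := by exact_mod_cast h2
      linarith
    have hnl : -2 ≤ n := by nlinarith
    have hnu : n ≤ 2 := by nlinarith
    interval_cases n
    · -- n = -2 : x = -π, z = -π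
      refine hzm (Complex.ext ?_ ?_)
      · rw [Complex.neg_re, Complex.ofReal_re, ← hx]
        rw [hx2]; push_cast; ring
      · rw [Complex.neg_im, Complex.ofReal_im, ← hyy, ← hy0]; norm_num
    · norm_num at hn3
    · norm_num at hn3
    · norm_num at hn3
    · -- n = 2 : x = π, z = π
      refine hzp (Complex.ext ?_ ?_)
      · rw [Complex.ofReal_re, ← hx]
        rw [hx2]; push_cast; ring
      · rw [Complex.ofReal_im, ← hyy, ← hy0]
  · -- y > 0
    have hs1' : Real.exp (-(2*y)) < 1 := by
      rw [show (1:ℝ) = Real.exp 0 from (Real.exp_zero).symm]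
      exact Real.exp_lt_exp.mpr (by linarith)
    have hP2 : -(π*π*Real.exp (-(2*y))) ≤ π*π*(Real.exp (-(2*y)) * Real.cos (2*x)) := by
      linarith [mul_nonneg (mul_nonneg (mul_pos hπ hπ).le hs0.le)
        (by linarith : (0:ℝ) ≤ 1 + Real.cos (2*x))]
    have hP3 : π*π*Real.exp (-(2*y)) < π*π := by
      have := mul_lt_mul_of_pos_left hs1' (mul_pos hπ hπ)
      linarith
    have hx2 : 9/16*(π*π) + y*y < x*x := by linarith
    have hxu : x*x + y*y < π*π := by linarith
    have hyy2 : 0 < y*y := mul_pos hy0 hy0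
    rcases lt_trichotomy x 0 with hxneg | hx0 | hxpos
    · have h34 : 3*π/4 < -x := by
        refine lt_of_pow_lt_pow_left₀ 2 (by linarith : (0:ℝ) ≤ -x) ?_
        linarith
      have hxg : -x < π := by
        refine lt_of_pow_lt_pow_left₀ 2 hπ.le ?_
        linarith
      have hsp : 0 < Real.sin (2*(-x) - π) :=
        Real.sin_pos_of_pos_of_lt_pi (by linarith) (by linarith)
      rw [Real.sin_sub_pi] at hsp
      have hss : Real.sin (2*(-x)) = -Real.sin (2*x) := by
        rw [show 2*(-x) = -(2*x) from by ring, Real.sin_neg]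
      rw [hss] at hsp
      have hsin : 0 < Real.sin (2*x) := by simpa using hsp
      have hA : 0 < π*π*(Real.exp (-(2*y)) * Real.sin (2*x)) :=
        mul_pos (mul_pos hπ hπ) (mul_pos hs0 hsin)
      have hB : 0 < (-x)*y := mul_pos (neg_pos.mpr hxneg) hy0
      linarith
    · have hxx0 : x*x = 0 := by rw [hx0]; ring
      linarith [mul_pos hπ hπ]
    · have h34 : 3*π/4 < x := by
        refine lt_of_pow_lt_pow_left₀ 2 (by linarith : (0:ℝ) ≤ x) ?_
        linarith
      have hxg : x < π := by
        refine lt_of_pow_lt_pow_left₀ 2 hπ.le ?_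
        linarith
      have hsp : 0 < Real.sin (2*x - π) :=
        Real.sin_pos_of_pos_of_lt_pi (by linarith) (by linarith)
      rw [Real.sin_sub_pi] at hsp
      have hA : 0 < π*π*(Real.exp (-(2*y)) * (-Real.sin (2*x))) :=
        mul_pos (mul_pos hπ hπ) (mul_pos hs0 hsp)
      have hB : 0 < x*y := mul_pos hxpos hy0
      linarith

theorem stmt_5 :
    ∃ E : ℂ → ℂ, Differentiable ℂ E ∧
      (∀ z : ℂ, z ≠ (π : ℂ) → z ≠ -(π : ℂ) →
        E z = ((32 * z ^ 2 - 25 * (π : ℂ) ^ 2) * Complex.I * Complex.exp (-Complex.I * z)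
            - 7 * (π : ℂ) ^ 2 * Complex.I * Complex.exp (Complex.I * z)) /
          (32 * (z ^ 2 - (π : ℂ) ^ 2))) ∧
      (∀ z : ℂ, E z = 0 → z.im < 0) := by
  refine ⟨EE, diff_EE, fun z h1 h2 => ?_, fun z hz => EE_zero_im hz⟩
  rw [EE_of_ne h1 h2, NN]
  have hden : (z - (π:ℂ)) * (z + (π:ℂ)) ≠ 0 :=
    mul_ne_zero (sub_ne_zero.2 h1) (fun h => h2 (by linear_combination h))
  have hden2 : 32 * (z ^ 2 - (π:ℂ) ^ 2) ≠ 0 := by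
    intro h
    exact hden (by linear_combination h / 32)
  have h3 : z + (π:ℂ) ≠ 0 := fun h => h2 (by linear_combination h)
  have h4 : z - (π:ℂ) ≠ 0 := sub_ne_zero.2 h1
  have h5 : z ^ 2 - (π:ℂ) ^ 2 ≠ 0 := right_ne_zero_of_mul hden2
  field_simp
  ring
end

section
/- Let $f$ be an entire function of exponential type at most $2$ that is bounded on the real line, and suppose $f$ vanishes at every point of $\frac{\pi}{2}\mathbb{Z} = \{\pi m/2 : m \in \mathbb{Z}\}$. Then $f(z) = c \sin(2z)$ for some constant $c$. -/
open Real Complex Filter Set Bornology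


lemma normSq_sin_aux (z : ℂ) :
    Complex.normSq (Complex.sin z) = Real.sin z.re ^ 2 + Real.sinh z.im ^ 2 := by
  rw [Complex.sin_eq]
  simp only [← Complex.ofReal_sin, ← Complex.ofReal_cos, ← Complex.ofReal_cosh,
    ← Complex.ofReal_sinh, ← Complex.ofReal_mul]
  rw [Complex.normSq_add_mul_I]
  have h1 := Real.sin_sq_add_cos_sq z.re
  have h2 := Real.cosh_sq z.im
  ring_nf
  nlinarith [Real.sinh_sq z.im]

lemma norm_sin_ge_sinh (z : ℂ) : |Real.sinh z.im| ≤ ‖Complex.sin z‖ := by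
  rw [Complex.norm_def, normSq_sin_aux]
  rw [← Real.sqrt_sq_eq_abs]
  exact Real.sqrt_le_sqrt (by nlinarith [sq_nonneg (Real.sin z.re)])

lemma norm_sin_eq_cosh {z : ℂ} (h : Real.sin z.re ^ 2 = 1) :
    ‖Complex.sin z‖ = Real.cosh z.im := by
  rw [Complex.norm_def, normSq_sin_aux, h]
  rw [show 1 + Real.sinh z.im ^ 2 = Real.cosh z.im ^ 2 by nlinarith [Real.cosh_sq z.im]]
  exact Real.sqrt_sq (Real.cosh_pos z.im).le

lemma sinh_ge (t : ℝ) (ht : 2 ≤ t) : Real.exp t / 3 ≤ Real.sinh t := by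
  rw [Real.sinh_eq]
  have h5 : (5:ℝ) ≤ Real.exp t * Real.exp t := by
    rw [← Real.exp_add]
    linarith [Real.add_one_le_exp (t + t)]
  have hinv : Real.exp (-t) = (Real.exp t)⁻¹ := Real.exp_neg t
  have hp : (0:ℝ) < Real.exp t := Real.exp_pos t
  rw [hinv, div_le_div_iff₀ (by norm_num) (by norm_num)]
  have : (Real.exp t)⁻¹ * Real.exp t = 1 := inv_mul_cancel₀ hp.ne'
  nlinarith

lemma cosh_ge (t : ℝ) : Real.exp |t| / 2 ≤ Real.cosh t := by
  rw [Real.cosh_eq]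
  rcases abs_cases t with ⟨h, _⟩ | ⟨h, _⟩ <;> rw [h] <;>
    nlinarith [Real.exp_pos t, Real.exp_pos (-t)]


lemma pl_upper (f : ℂ → ℂ) (hdiff : Differentiable ℂ f)
    (htype : ∀ ε : ℝ, 0 < ε → ∃ C : ℝ, ∀ z : ℂ, ‖f z‖ ≤ C * Real.exp ((2 + ε) * ‖z‖))
    (B : ℝ) (hB : ∀ x : ℝ, ‖f x‖ ≤ B) {δ : ℝ} (hδ : 0 < δ) :
    ∀ z : ℂ, 0 ≤ z.im → ‖f z‖ ≤ B * Real.exp ((2 + δ) * z.im) := by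
  obtain ⟨C₁, hC₁⟩ := htype 1 one_pos
  obtain ⟨C₂, hC₂⟩ := htype (δ/2) (by linarith)
  have hC₁0 : 0 ≤ C₁ := by
    have := hC₁ 0
    simp at this
    exact le_trans (norm_nonneg _) this
  set F : ℂ → ℂ := fun w => Complex.exp (-((2 + δ : ℝ) : ℂ) * w) * f (I * w) with hF
  have hFd : Differentiable ℂ F :=
    ((differentiable_id.const_mul _).cexp).mul (hdiff.comp (differentiable_id.const_mul I))
  have hFnorm : ∀ w : ℂ, ‖F w‖ = Real.exp (-((2+δ) * w.re)) * ‖f (I * w)‖ := by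
    intro w
    rw [hF]
    simp only [norm_mul, Complex.norm_exp]
    congr 2
    simp [Complex.ofReal_add]
    ring
  have key : ∀ w : ℂ, 0 ≤ w.re → ‖F w‖ ≤ B := by
    intro w hw
    refine PhragmenLindelof.right_half_plane_of_bounded_on_real
      (hFd.diffContOnCl) ?_ ?_ ?_ hw
    · refine ⟨1, by norm_num, 5 + δ, ?_⟩
      refine Asymptotics.IsBigO.of_bound C₁ (Eventually.of_forall fun w => ?_)
      rw [hFnorm]
      have h1 : ‖f (I * w)‖ ≤ C₁ * Real.exp ((2+1) * ‖w‖) := by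
        have := hC₁ (I * w)
        simpa [norm_mul] using this
      have h2 : Real.exp (-((2+δ) * w.re)) ≤ Real.exp ((2+δ) * ‖w‖) := by
        apply Real.exp_le_exp.2
        have : |w.re| ≤ ‖w‖ := Complex.abs_re_le_norm w
        nlinarith [abs_nonneg w.re, neg_abs_le w.re, le_abs_self w.re]
      calc Real.exp (-((2+δ) * w.re)) * ‖f (I * w)‖
          ≤ Real.exp ((2+δ) * ‖w‖) * (C₁ * Real.exp ((2+1) * ‖w‖)) := by
            apply mul_le_mul h2 h1 (norm_nonneg _) (Real.exp_pos _).le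
        _ = C₁ * Real.exp ((5 + δ) * ‖w‖) := by
            rw [show Real.exp ((2+δ) * ‖w‖) * (C₁ * Real.exp ((2+1) * ‖w‖))
              = C₁ * (Real.exp ((2+δ) * ‖w‖) * Real.exp ((2+1) * ‖w‖)) by ring, ← Real.exp_add]
            ring_nf
        _ ≤ C₁ * ‖Real.exp ((5 + δ) * ‖w‖ ^ (1:ℝ))‖ := by
            rw [Real.norm_eq_abs, abs_of_pos (Real.exp_pos _), Real.rpow_one]
    · apply isBoundedUnder_of_eventually_le (a := C₂)
      filter_upwards [eventually_ge_atTop (0:ℝ)] with x hx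
      rw [hFnorm]
      have h1 : ‖f (I * x)‖ ≤ C₂ * Real.exp ((2 + δ/2) * x) := by
        have := hC₂ (I * x)
        simpa [norm_mul, _root_.abs_of_nonneg hx] using this
      have hC₂0 : 0 ≤ C₂ := by
        have h0 := hC₂ 0
        simp at h0
        exact le_trans (norm_nonneg _) h0
      calc Real.exp (-((2+δ) * (x:ℂ).re)) * ‖f (I * x)‖
          ≤ Real.exp (-((2+δ) * x)) * (C₂ * Real.exp ((2 + δ/2) * x)) := by
            apply mul_le_mul ?_ h1 (norm_nonneg _) (Real.exp_pos _).le
            simp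
        _ = C₂ * Real.exp (-(δ/2) * x) := by rw [mul_comm, mul_assoc, ← Real.exp_add]; ring_nf
        _ ≤ C₂ * 1 := by
            apply mul_le_mul_of_nonneg_left _ hC₂0
            rw [Real.exp_le_one_iff]
            nlinarith
        _ = C₂ := mul_one _
    · intro x
      rw [hFnorm]
      have h1 : I * (x * I) = -(x:ℂ) := by
        rw [mul_comm (x:ℂ) I, ← mul_assoc, Complex.I_mul_I]; ring
      have h2 : ((x:ℂ) * I).re = 0 := by simp
      rw [h1, h2]
      have := hB (-x)
      simpa using this
  intro z hz
  have hw := key (-I * z) (by simpa using hz)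
  rw [hFnorm] at hw
  have h1 : I * (-I * z) = z := by rw [← mul_assoc]; simp
  have h2 : (-I * z).re = z.im := by simp
  rw [h1, h2] at hw
  have hmul : Real.exp (-((2+δ)*z.im)) * Real.exp ((2+δ)*z.im) = 1 := by
    rw [← Real.exp_add]; simp
  nlinarith [mul_le_mul_of_nonneg_right hw (Real.exp_pos ((2+δ)*z.im)).le, hmul,
    norm_nonneg (f z), Real.exp_pos ((2+δ)*z.im)]

lemma f_bound (f : ℂ → ℂ) (hdiff : Differentiable ℂ f)
    (htype : ∀ ε : ℝ, 0 < ε → ∃ C : ℝ, ∀ z : ℂ, ‖f z‖ ≤ C * Real.exp ((2 + ε) * ‖z‖))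
    (B : ℝ) (hB : ∀ x : ℝ, ‖f x‖ ≤ B) :
    ∀ z : ℂ, ‖f z‖ ≤ B * Real.exp (2 * |z.im|) := by
  intro z
  have key : ∀ δ : ℝ, 0 < δ → ‖f z‖ ≤ B * Real.exp ((2 + δ) * |z.im|) := by
    intro δ hδ
    rcases le_or_gt 0 z.im with h | h
    · rw [_root_.abs_of_nonneg h]
      exact pl_upper f hdiff htype B hB hδ z h
    · have hd2 : Differentiable ℂ (fun w => f (-w)) := hdiff.comp differentiable_neg
      have ht2 : ∀ ε : ℝ, 0 < ε → ∃ C : ℝ, ∀ w : ℂ,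
          ‖(fun w => f (-w)) w‖ ≤ C * Real.exp ((2 + ε) * ‖w‖) := by
        intro ε hε
        obtain ⟨C, hC⟩ := htype ε hε
        exact ⟨C, fun w => by simpa using hC (-w)⟩
      have hB2 : ∀ x : ℝ, ‖(fun w => f (-w)) x‖ ≤ B := by
        intro x
        have := hB (-x)
        simpa using this
      have := pl_upper _ hd2 ht2 B hB2 hδ (-z) (by simpa using h.le)
      rw [_root_.abs_of_neg h]
      simpa using this
  have hlim : Tendsto (fun δ : ℝ => B * Real.exp ((2 + δ) * |z.im|)) (nhdsWithin 0 (Ioi 0))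
      (nhds (B * Real.exp (2 * |z.im|))) := by
    have : Continuous (fun δ : ℝ => B * Real.exp ((2 + δ) * |z.im|)) := by continuity
    have h0 := this.tendsto 0
    simp only [add_zero, zero_add] at h0
    exact Tendsto.mono_left h0 nhdsWithin_le_nhds
  exact ge_of_tendsto hlim (eventually_nhdsWithin_of_forall fun δ hδ => key δ hδ)

lemma g_exists (f : ℂ → ℂ) (hdiff : Differentiable ℂ f)
    (hvanish : ∀ z : ℂ, Complex.sin (2*z) = 0 → f z = 0) :
    ∃ g : ℂ → ℂ, Differentiable ℂ g ∧ ∀ z : ℂ, f z = Complex.sin (2*z) * g z := by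
  classical
  set s : ℂ → ℂ := fun z => Complex.sin (2*z) with hs
  have hs_diff : Differentiable ℂ s :=
    Complex.differentiable_sin.comp (differentiable_id.const_mul 2)
  have hs_deriv : ∀ z : ℂ, HasDerivAt s (2 * Complex.cos (2*z)) z := by
    intro z
    have h1 : HasDerivAt (fun w : ℂ => 2*w) 2 z := by
      simpa using (hasDerivAt_id z).const_mul (2:ℂ)
    have := (Complex.hasDerivAt_sin (2*z)).comp z h1
    rw [mul_comm (2:ℂ) (Complex.cos _)]; exact this
  have hcos_ne : ∀ z : ℂ, s z = 0 → (2 : ℂ) * Complex.cos (2*z) ≠ 0 := by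
    intro z hz hc
    have h := Complex.sin_sq_add_cos_sq (2*z)
    have hz' : Complex.sin (2*z) = 0 := hz
    have hc' : Complex.cos (2*z) = 0 := by
      have h2 : (2:ℂ) ≠ 0 := two_ne_zero
      exact (mul_eq_zero.mp hc).resolve_left h2
    rw [hz', hc'] at h
    norm_num at h
  set g : ℂ → ℂ := fun z => if s z = 0 then deriv f z / (2 * Complex.cos (2*z)) else f z / s z
    with hgdef
  have hgd : Differentiable ℂ g := by
    intro z₀
    by_cases h0 : s z₀ = 0
    · set q : ℂ → ℂ := fun z => dslope f z₀ z / dslope s z₀ z with hq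
      have hq1 : Differentiable ℂ (dslope f z₀) := by
        rw [← differentiableOn_univ]
        exact (Complex.differentiableOn_dslope univ_mem).mpr hdiff.differentiableOn
      have hq2 : Differentiable ℂ (dslope s z₀) := by
        rw [← differentiableOn_univ]
        exact (Complex.differentiableOn_dslope univ_mem).mpr hs_diff.differentiableOn
      have hden : dslope s z₀ z₀ ≠ 0 := by
        rw [dslope_same, (hs_deriv z₀).deriv]
        exact hcos_ne z₀ h0
      have hqd : DifferentiableAt ℂ q z₀ := (hq1 z₀).div (hq2 z₀) hden
      have hsne : ∀ᶠ z in nhdsWithin z₀ {z₀}ᶜ, s z ≠ 0 := by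
        rcases (hs_diff.analyticAt z₀).eventually_eq_zero_or_eventually_ne_zero with h | h
        · exfalso
          have hd0 : deriv s z₀ = 0 := by
            have : s =ᶠ[nhds z₀] (fun _ => (0:ℂ)) := h
            rw [this.deriv_eq]
            simp
          rw [(hs_deriv z₀).deriv] at hd0
          exact hcos_ne z₀ h0 hd0
        · exact h
      have hev : g =ᶠ[nhds z₀] q := by
        filter_upwards [eventually_nhdsWithin_iff.mp hsne] with z hz
        by_cases hzz : z = z₀
        · subst hzz
          show (if s z = 0 then deriv f z / (2 * Complex.cos (2*z)) else f z / s z) = q z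
          rw [if_pos h0, hq]
          simp only [dslope_same, (hs_deriv z).deriv]
        · have hsz := hz hzz
          show (if s z = 0 then deriv f z / (2 * Complex.cos (2*z)) else f z / s z) = q z
          rw [if_neg hsz, hq]
          simp only [dslope_of_ne _ hzz, slope_def_field, hvanish z₀ h0, h0, sub_zero]
          rw [div_div_div_cancel_right₀]
          exact sub_ne_zero.mpr hzz
      exact (hev.differentiableAt_iff).mpr hqd
    · have hev : g =ᶠ[nhds z₀] fun z => f z / s z := by
        filter_upwards [(hs_diff z₀).continuousAt.eventually_ne h0] with z hz
        show (if s z = 0 then deriv f z / (2 * Complex.cos (2*z)) else f z / s z) = _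
        rw [if_neg hz]
      exact (hev.differentiableAt_iff).mpr ((hdiff z₀).div (hs_diff z₀) h0)
  refine ⟨g, hgd, fun z => ?_⟩
  by_cases h : s z = 0
  · rw [show Complex.sin (2*z) = s z from rfl, h, zero_mul]
    exact hvanish z h
  · rw [show Complex.sin (2*z) = s z from rfl, hgdef]
    simp only [if_neg h]
    rw [mul_comm, div_mul_cancel₀ _ h]

lemma g_bound (f g : ℂ → ℂ) (B : ℝ) (hB0 : 0 ≤ B)
    (hfb : ∀ z : ℂ, ‖f z‖ ≤ B * Real.exp (2 * |z.im|))
    (hgd : Differentiable ℂ g)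
    (hfg : ∀ z : ℂ, f z = Complex.sin (2*z) * g z) :
    ∀ z : ℂ, ‖g z‖ ≤ 3 * B := by
  -- general principle: a lower bound on |sin 2z| gives an upper bound on |g|
  have main : ∀ (z : ℂ) (L : ℝ), 0 < L → Real.exp (2 * |z.im|) / L ≤ ‖Complex.sin (2*z)‖ →
      ‖g z‖ ≤ L * B := by
    intro z L hL hlow
    have heq : ‖f z‖ = ‖Complex.sin (2*z)‖ * ‖g z‖ := by
      rw [hfg z]; simp [norm_mul]
    have h1 := hfb z
    rw [heq] at h1
    have hexp : 0 < Real.exp (2 * |z.im|) := Real.exp_pos _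
    have h2 : Real.exp (2 * |z.im|) / L * ‖g z‖ ≤ B * Real.exp (2 * |z.im|) :=
      le_trans (mul_le_mul_of_nonneg_right hlow (norm_nonneg _)) h1
    rw [div_mul_eq_mul_div, div_le_iff₀ hL] at h2
    nlinarith [hexp]
  -- away from the real axis
  have away : ∀ z : ℂ, 1 ≤ |z.im| → ‖g z‖ ≤ 3 * B := by
    intro z hy
    apply main z 3 (by norm_num)
    calc Real.exp (2 * |z.im|) / 3 ≤ Real.sinh (2 * |z.im|) := sinh_ge _ (by linarith)
      _ = |Real.sinh ((2*z).im)| := by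
          rw [Real.abs_sinh]
          congr 1
          rw [Complex.mul_im]
          simp [abs_mul]
      _ ≤ ‖Complex.sin (2*z)‖ := norm_sin_ge_sinh _
  intro z
  rcases le_or_gt 1 |z.im| with hy | hy
  · exact away z hy
  · -- max modulus on a rectangle
    set k : ℤ := ⌊(z.re - π/4)/(π/2)⌋ with hk
    set a : ℝ := π/4 + k * (π/2) with ha
    set b : ℝ := a + π/2 with hb
    have hpi2 : (0:ℝ) < π/2 := by positivity
    have hale : a ≤ z.re := by
      have h1 := Int.floor_le ((z.re - π/4)/(π/2))
      rw [← hk] at h1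
      have h2 : (k:ℝ) * (π/2) ≤ z.re - π/4 := (le_div_iff₀ hpi2).mp h1
      rw [ha]; linarith
    have hble : z.re ≤ b := by
      have h1 := Int.lt_floor_add_one ((z.re - π/4)/(π/2))
      rw [← hk] at h1
      have h2 : z.re - π/4 < ((k:ℝ) + 1) * (π/2) := (div_lt_iff₀ hpi2).mp h1
      rw [hb, ha]; nlinarith
    have hab : a < b := by rw [hb]; linarith
    set U : Set ℂ := Ioo a b ×ℂ Ioo (-1:ℝ) 1 with hU
    have hUb : IsBounded U := (Metric.isBounded_Ioo a b).reProdIm (Metric.isBounded_Ioo _ _)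
    have hcl : z ∈ closure U := by
      rw [hU, Complex.closure_reProdIm, Complex.mem_reProdIm, closure_Ioo hab.ne,
        closure_Ioo (by norm_num : (-1:ℝ) ≠ 1)]
      exact ⟨⟨hale, hble⟩, ⟨by cases abs_cases z.im <;> linarith, by cases abs_cases z.im <;> linarith⟩⟩
    refine Complex.norm_le_of_forall_mem_frontier_norm_le hUb hgd.diffContOnCl ?_ hcl
    intro w hw
    rw [hU, Complex.frontier_reProdIm] at hw
    rcases hw with hw | hw
    · -- top/bottom edge : |im w| = 1
      rw [Complex.mem_reProdIm, frontier_Ioo (by norm_num : (-1:ℝ) < 1)] at hw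
      have : |w.im| = 1 := by
        rcases hw.2 with h | h <;> simp_all
      exact away w this.ge
    · -- vertical edges : re w = a or b
      rw [Complex.mem_reProdIm, frontier_Ioo hab, closure_Ioo (by norm_num : (-1:ℝ) ≠ 1)] at hw
      have hsin : Real.sin ((2*w).re) ^ 2 = 1 := by
        have hre : (2*w).re = 2 * w.re := by simp
        have key : ∀ n : ℤ, Real.sin (π/2 + n * π) ^ 2 = 1 := by
          intro n
          rw [Real.sin_add_int_mul_pi, Real.sin_pi_div_two]
          rcases Int.even_or_odd n with he | he
          · rw [Even.neg_one_zpow he]; norm_num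
          · rw [Odd.neg_one_zpow he]; norm_num
        rcases hw.1 with h | h
        · rw [hre, h, ha]
          have : 2 * (π/4 + (k:ℝ) * (π/2)) = π/2 + k * π := by ring
          rw [this]; exact key k
        · rw [hre, h, hb, ha]
          have : 2 * (π/4 + (k:ℝ) * (π/2) + π/2) = π/2 + (k+1 : ℤ) * π := by push_cast; ring
          rw [this]; exact key (k+1)
      have habs : ‖Complex.sin (2*w)‖ = Real.cosh ((2*w).im) :=
        norm_sin_eq_cosh hsin
      have him : (2*w).im = 2 * w.im := by simp
      have h2 : ‖g w‖ ≤ 2 * B := by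
        apply main w 2 (by norm_num)
        rw [habs, him]
        calc Real.exp (2 * |w.im|) / 2 = Real.exp (|2 * w.im|) / 2 := by rw [abs_mul]; norm_num
          _ ≤ Real.cosh (2 * w.im) := cosh_ge _
      linarith


theorem stmt_8 (f : ℂ → ℂ) (hdiff : Differentiable ℂ f)
    (htype : ∀ ε : ℝ, 0 < ε → ∃ C : ℝ, ∀ z : ℂ, ‖f z‖ ≤ C * Real.exp ((2 + ε) * ‖z‖))
    (hbdd : ∃ B : ℝ, ∀ x : ℝ, ‖f x‖ ≤ B)
    (hzero : ∀ m : ℤ, f ((π : ℂ) * m / 2) = 0) :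
    ∃ c : ℂ, ∀ z : ℂ, f z = c * Complex.sin (2 * z) := by
  obtain ⟨B₀, hB₀⟩ := hbdd
  set B : ℝ := max B₀ 0 with hBdef
  have hB : ∀ x : ℝ, ‖f x‖ ≤ B := fun x => le_trans (hB₀ x) (le_max_left _ _)
  have hB0 : 0 ≤ B := le_max_right _ _
  have hvanish : ∀ z : ℂ, Complex.sin (2*z) = 0 → f z = 0 := by
    intro z hz
    obtain ⟨k, hk⟩ := Complex.sin_eq_zero_iff.mp hz
    have hzk : z = (π : ℂ) * k / 2 := by linear_combination hk / 2
    rw [hzk]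
    exact hzero k
  have hfb : ∀ z : ℂ, ‖f z‖ ≤ B * Real.exp (2 * |z.im|) := f_bound f hdiff htype B hB
  obtain ⟨g, hgd, hfg⟩ := g_exists f hdiff hvanish
  have hgb : ∀ z : ℂ, ‖g z‖ ≤ 3 * B := g_bound f g B hB0 hfb hgd hfg
  have hrange : Bornology.IsBounded (Set.range g) := by
    rw [isBounded_iff_forall_norm_le]
    exact ⟨3 * B, by rintro - ⟨z, rfl⟩; exact hgb z⟩
  refine ⟨g 0, fun z => ?_⟩
  rw [hfg z, hgd.apply_eq_apply_of_bounded hrange z 0]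
  ring
end

section
/- Let $E = A + iB$ be a Hermite--Biehler function (entire, $|E(z)| > |E(\bar z)|$ for $\operatorname{Im} z > 0$, no real zeros), with $A, B$ entire and real on $\mathbb{R}$. Then $A$ and $B$ have only real zeros, and the zeros of $A$ and $B$ strictly interlace on $\mathbb{R}$. -/
open Complex Filter Set

lemma HB_freq {x y : ℝ} (hxy : x < y) {p : ℂ → Prop}
    (hp : ∀ t : ℝ, x < t → t < y → p t) : ∃ᶠ z in nhdsWithin (x:ℂ) {(x:ℂ)}ᶜ, p z := by
  have h2 : Tendsto (fun n : ℕ => ((n:ℝ) + 2)) atTop atTop :=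
    tendsto_atTop_add_const_right _ 2 tendsto_natCast_atTop_atTop
  have hd : Tendsto (fun n : ℕ => (y - x) / ((n:ℝ) + 2)) atTop (nhds 0) :=
    Tendsto.div_atTop tendsto_const_nhds h2
  have hdpos : ∀ n : ℕ, 0 < (y - x) / ((n:ℝ) + 2) := fun n =>
    div_pos (by linarith) (by positivity)
  have hdlt : ∀ n : ℕ, (y - x) / ((n:ℝ) + 2) < y - x := fun n =>
    div_lt_self (by linarith) (by have : (0:ℝ) ≤ n := Nat.cast_nonneg n; linarith)
  set u : ℕ → ℂ := fun n => ((x + (y - x) / ((n:ℝ) + 2) : ℝ) : ℂ) with hu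
  have hur : Tendsto (fun n : ℕ => x + (y - x) / ((n:ℝ) + 2)) atTop (nhds x) := by
    simpa using tendsto_const_nhds.add hd
  have hutend : Tendsto u atTop (nhdsWithin (x:ℂ) {(x:ℂ)}ᶜ) := by
    apply tendsto_nhdsWithin_of_tendsto_nhds_of_eventually_within
    · exact (Complex.continuous_ofReal.tendsto x).comp hur
    · refine Eventually.of_forall fun n => ?_
      simp only [u, mem_compl_iff, mem_singleton_iff, Complex.ofReal_inj]
      have := hdpos n; intro h; linarith
  exact hutend.frequently (Frequently.of_forall fun n => hp _
    (by have := hdpos n; linarith) (by have := hdlt n; linarith))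

lemma HB_entire_eq {f g : ℂ → ℂ} (hf : Differentiable ℂ f) (hg : Differentiable ℂ g)
    {x y : ℝ} (hxy : x < y) (h : ∀ t : ℝ, x < t → t < y → f t = g t) : f = g :=
  (analyticOnNhd_univ_iff_differentiable.mpr hf).eq_of_frequently_eq
    (analyticOnNhd_univ_iff_differentiable.mpr hg) (HB_freq hxy h)

lemma HB_conj_diff {f : ℂ → ℂ} (hf : Differentiable ℂ f) :
    Differentiable ℂ (fun z => starRingEnd ℂ (f (starRingEnd ℂ z))) := by
  intro z
  have key : HasDerivAt (fun z => starRingEnd ℂ (f (starRingEnd ℂ z)))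
      (starRingEnd ℂ (deriv f (starRingEnd ℂ z))) z := by
    rw [hasDerivAt_iff_tendsto_slope]
    have hs : slope (fun z => starRingEnd ℂ (f (starRingEnd ℂ z))) z
        = fun w => starRingEnd ℂ (slope f (starRingEnd ℂ z) (starRingEnd ℂ w)) := by
      funext w
      simp only [slope_def_field, map_div₀, map_sub, Complex.conj_conj]
    rw [hs]
    have h1 : Tendsto (starRingEnd ℂ) (nhdsWithin z {z}ᶜ)
        (nhdsWithin (starRingEnd ℂ z) {starRingEnd ℂ z}ᶜ) := by
      apply tendsto_nhdsWithin_of_tendsto_nhds_of_eventually_within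
      · exact (Complex.continuous_conj.tendsto z).mono_left nhdsWithin_le_nhds
      · exact eventually_mem_nhdsWithin.mono fun w hw h =>
          hw ((starRingEnd ℂ).injective h)
    have h2 : Tendsto (slope f (starRingEnd ℂ z))
        (nhdsWithin (starRingEnd ℂ z) {starRingEnd ℂ z}ᶜ)
        (nhds (deriv f (starRingEnd ℂ z))) :=
      hasDerivAt_iff_tendsto_slope.mp (hf _).hasDerivAt
    exact ((Complex.continuous_conj.tendsto _).comp h2).comp h1
  exact key.differentiableAt

lemma HB_reflect {f : ℂ → ℂ} (hf : Differentiable ℂ f) (hreal : ∀ x : ℝ, (f x).im = 0) :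
    ∀ z, f (starRingEnd ℂ z) = starRingEnd ℂ (f z) := by
  have heq : (fun z => starRingEnd ℂ (f (starRingEnd ℂ z))) = f := by
    apply HB_entire_eq (HB_conj_diff hf) hf (zero_lt_one (α := ℝ))
    intro t _ _
    rw [Complex.conj_ofReal, Complex.conj_eq_iff_im]
    exact hreal t
  intro z
  have := congrFun heq (starRingEnd ℂ z)
  rw [Complex.conj_conj] at this
  exact this.symm

lemma HB_deriv_im {f : ℂ → ℂ} (hf : Differentiable ℂ f) (hreal : ∀ x : ℝ, (f x).im = 0)
    (x : ℝ) : (deriv f x).im = 0 := by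
  have h1 : HasDerivAt (fun w : ℂ => -I * f w) (-I * deriv f x) (x : ℂ) :=
    (hf _).hasDerivAt.const_mul (-I)
  have h2 : HasDerivAt (fun t : ℝ => ((-I * f t).re)) ((-I * deriv f x).re) x :=
    h1.real_of_complex
  have h3 : (fun t : ℝ => ((-I * f t).re)) = fun _ : ℝ => (0 : ℝ) := by
    funext t
    simp [Complex.mul_re, hreal t]
  rw [h3] at h2
  have h4 : (-I * deriv f x).re = 0 := h2.unique (hasDerivAt_const x 0)
  simpa [Complex.mul_re] using h4

lemma HB_key {E : ℂ → ℂ} (hEd : Differentiable ℂ E)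
    (hHB : ∀ z : ℂ, 0 < z.im → ‖E (starRingEnd ℂ z)‖ < ‖E z‖) (x : ℝ) :
    0 ≤ (E x).re * (deriv E x * I).re + (E x).im * (deriv E x * I).im := by
  -- the complex curve y ↦ E (x + y I)
  have hG : ∀ w : ℂ, HasDerivAt (fun w : ℂ => E ((x : ℂ) + w * I))
      (deriv E ((x : ℂ) + w * I) * I) w := by
    intro w
    have hin : HasDerivAt (fun w : ℂ => (x : ℂ) + w * I) (1 * I) w :=
      ((hasDerivAt_id w).mul_const I).const_add _
    have := (hEd _).hasDerivAt.comp w hin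
    rw [one_mul] at this; exact this
  have hF : ∀ y : ℝ, HasDerivAt (fun t : ℝ => E ((x : ℂ) + t * I))
      (deriv E ((x : ℂ) + y * I) * I) y := by
    intro y
    exact (hG (y : ℂ)).comp_ofReal
  set g : ℝ → ℝ := fun y => Complex.normSq (E ((x : ℂ) + y * I)) with hgdef
  set e := E ((x : ℂ) + (0:ℝ) * I) with he
  set d := deriv E ((x : ℂ) + (0:ℝ) * I) * I with hd
  set c := e.re * d.re + e.im * d.im with hc
  -- derivative of g at 0
  have hre : HasDerivAt (fun t : ℝ => (E ((x : ℂ) + t * I)).re) d.re 0 :=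
    Complex.reCLM.hasFDerivAt.comp_hasDerivAt 0 (hF 0)
  have him : HasDerivAt (fun t : ℝ => (E ((x : ℂ) + t * I)).im) d.im 0 :=
    Complex.imCLM.hasFDerivAt.comp_hasDerivAt 0 (hF 0)
  have hg : HasDerivAt g (2 * c) 0 := by
    have := (hre.mul hre).add (him.mul him)
    have h2 : g = fun t : ℝ => (E ((x : ℂ) + t * I)).re * (E ((x : ℂ) + t * I)).re
        + (E ((x : ℂ) + t * I)).im * (E ((x : ℂ) + t * I)).im := by
      funext t; simp [hgdef, Complex.normSq_apply]
    rw [h2]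
    refine this.congr_deriv ?_
    simp only [hc, ← he]
    ring
  have hgneg : HasDerivAt (fun y : ℝ => g (-y)) (-(2 * c)) 0 := by
    have h0 : HasDerivAt (fun y : ℝ => -y) (-1 : ℝ) 0 := (hasDerivAt_id 0).neg
    have hg' : HasDerivAt g (2 * c) (-(0:ℝ)) := by simpa using hg
    have := hg'.comp (0 : ℝ) h0
    rw [mul_neg_one] at this; exact this
  set u : ℝ → ℝ := fun y => g y - g (-y) with hudef
  have hu : HasDerivAt u (2 * c + 2 * c) 0 := by
    have := hg.sub hgneg
    rw [sub_neg_eq_add] at this; exact this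
  -- u is positive on (0, ∞)
  have hupos : ∀ y : ℝ, 0 < y → 0 < u y := by
    intro y hy
    have him' : ((x : ℂ) + y * I).im = y := by simp
    have := hHB ((x : ℂ) + y * I) (by rw [him']; exact hy)
    have hconj : starRingEnd ℂ ((x : ℂ) + y * I) = (x : ℂ) + (-y : ℝ) * I := by
      simp [Complex.ext_iff]
    rw [hconj] at this
    have hlt : Complex.normSq (E ((x : ℂ) + (-y : ℝ) * I))
        < Complex.normSq (E ((x : ℂ) + y * I)) := by
      rw [Complex.normSq_eq_norm_sq, Complex.normSq_eq_norm_sq]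
      exact pow_lt_pow_left₀ this
        (norm_nonneg _) (by norm_num)
    simpa [hudef, hgdef, sub_pos] using hlt
  have hu0 : u 0 = 0 := by simp [hudef]
  -- hence the derivative of u at 0 is nonnegative
  have hslope : Tendsto (slope u 0) (nhdsWithin 0 (Ioi 0)) (nhds (2 * c + 2 * c)) :=
    (hasDerivAt_iff_tendsto_slope.mp hu).mono_left
      (nhdsWithin_mono _ (fun t ht => ne_of_gt ht))
  have hnonneg : 0 ≤ 2 * c + 2 * c := by
    refine ge_of_tendsto hslope ?_
    refine eventually_mem_nhdsWithin.mono fun t ht => ?_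
    have ht' : 0 < t := ht
    rw [slope_def_field, hu0, sub_zero, sub_zero]
    exact div_nonneg (le_of_lt (hupos t ht')) (le_of_lt ht')
  have : 0 ≤ c := by linarith
  simpa [hc, he, hd] using this

theorem stmt_9 (E A B : ℂ → ℂ)
    (hA : Differentiable ℂ A) (hB : Differentiable ℂ B)
    (hAreal : ∀ x : ℝ, (A x).im = 0) (hBreal : ∀ x : ℝ, (B x).im = 0)
    (hE : ∀ z : ℂ, E z = A z + Complex.I * B z)
    (hHB : ∀ z : ℂ, 0 < z.im → ‖E (starRingEnd ℂ z)‖ < ‖E z‖)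
    (hnoreal : ∀ x : ℝ, E x ≠ 0) :
    (∀ z : ℂ, A z = 0 → z.im = 0) ∧ (∀ z : ℂ, B z = 0 → z.im = 0) ∧
      (∀ x : ℝ, ¬(A x = 0 ∧ B x = 0)) ∧
      (∀ x y : ℝ, x < y → A x = 0 → A y = 0 →
        ∃ t : ℝ, x < t ∧ t < y ∧ B t = 0) ∧
      (∀ x y : ℝ, x < y → B x = 0 → B y = 0 →
        ∃ t : ℝ, x < t ∧ t < y ∧ A t = 0) := by
  have hArefl := HB_reflect hA hAreal
  have hBrefl := HB_reflect hB hBreal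
  have hEfun : E = fun z => A z + I * B z := funext hE
  have hEdiff : Differentiable ℂ E := by
    rw [hEfun]; exact hA.add (hB.const_mul I)
  have hderivE : ∀ z : ℂ, deriv E z = deriv A z + I * deriv B z := by
    intro z
    have h1 : HasDerivAt E (deriv A z + I * deriv B z) z := by
      rw [hEfun]
      exact (hA z).hasDerivAt.add ((hB z).hasDerivAt.const_mul I)
    exact h1.deriv
  have claim3 : ∀ x : ℝ, ¬(A x = 0 ∧ B x = 0) := by
    rintro x ⟨h1, h2⟩
    exact hnoreal x (by rw [hE]; simp [h1, h2])
  have claim1 : ∀ z : ℂ, A z = 0 → z.im = 0 := by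
    have aux : ∀ w : ℂ, 0 < w.im → A w = 0 → False := by
      intro w hw hAw
      have h1 := hHB w hw
      have e1 : E w = I * B w := by rw [hE, hAw]; ring
      have e2 : E (starRingEnd ℂ w) = I * starRingEnd ℂ (B w) := by
        rw [hE, hArefl w, hBrefl w, hAw]; simp
      rw [e1, e2] at h1
      simp [norm_mul, RCLike.norm_conj] at h1
    intro z hz
    by_contra h
    rcases lt_or_gt_of_ne h with hneg | hpos
    · refine aux (starRingEnd ℂ z) (by simp [Complex.conj_im]; linarith) ?_
      rw [hArefl z, hz]; simp
    · exact aux z hpos hz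
  have claim2 : ∀ z : ℂ, B z = 0 → z.im = 0 := by
    have aux : ∀ w : ℂ, 0 < w.im → B w = 0 → False := by
      intro w hw hBw
      have h1 := hHB w hw
      have e1 : E w = A w := by rw [hE, hBw]; ring
      have e2 : E (starRingEnd ℂ w) = starRingEnd ℂ (A w) := by
        rw [hE, hArefl w, hBrefl w, hBw]; simp
      rw [e1, e2] at h1
      simp [RCLike.norm_conj] at h1
    intro z hz
    by_contra h
    rcases lt_or_gt_of_ne h with hneg | hpos
    · refine aux (starRingEnd ℂ z) (by simp [Complex.conj_im]; linarith) ?_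
      rw [hBrefl z, hz]; simp
    · exact aux z hpos hz
  have key2 : ∀ x : ℝ, (A x).re * (deriv B x).re ≤ (deriv A x).re * (B x).re := by
    intro x
    have h := HB_key hEdiff hHB x
    rw [hE, hderivE] at h
    simp only [Complex.add_re, Complex.add_im, Complex.mul_re, Complex.mul_im,
      Complex.I_re, Complex.I_im, hAreal x, hBreal x,
      HB_deriv_im hA hAreal x, HB_deriv_im hB hBreal x] at h
    nlinarith [h]
  have Breal : ∀ t : ℝ, B t = (((B t).re : ℝ) : ℂ) := fun t =>
    Complex.ext (by simp) (by simp [hBreal t])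
  have Areal : ∀ t : ℝ, A t = (((A t).re : ℝ) : ℂ) := fun t =>
    Complex.ext (by simp) (by simp [hAreal t])
  have hA0F : A = (fun _ => (0 : ℂ)) → False := by
    intro hA0
    have h1 := hHB I (by simp)
    have e1 : E I = I * B I := by rw [hE, congrFun hA0 I]; ring
    have e2 : E (starRingEnd ℂ I) = I * starRingEnd ℂ (B I) := by
      rw [hE, congrFun hA0, hBrefl]; simp
    rw [e1, e2] at h1
    simp [norm_mul, RCLike.norm_conj] at h1
  have hB0F : B = (fun _ => (0 : ℂ)) → False := by
    intro hB0
    have h1 := hHB I (by simp)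
    have e1 : E I = A I := by rw [hE, congrFun hB0 I]; ring
    have e2 : E (starRingEnd ℂ I) = starRingEnd ℂ (A I) := by
      rw [hE, hArefl, congrFun hB0]; simp
    rw [e1, e2] at h1
    simp [RCLike.norm_conj] at h1
  refine ⟨claim1, claim2, claim3, ?_, ?_⟩
  · -- zeros of A interlace with a zero of B
    intro x y hxy hAx hAy
    by_contra hcon
    push_neg at hcon
    have hbne : ∀ t ∈ Icc x y, (B (t : ℂ)).re ≠ 0 := by
      intro t ht h0
      have hBt : B (t : ℂ) = 0 := by rw [Breal t, h0]; simp
      rcases eq_or_lt_of_le ht.1 with h | h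
      · exact claim3 x ⟨hAx, h ▸ hBt⟩
      rcases eq_or_lt_of_le ht.2 with h' | h'
      · exact claim3 y ⟨hAy, h' ▸ hBt⟩
      · exact hcon t h h' hBt
    set q : ℝ → ℝ := fun t => (A (t : ℂ)).re / (B (t : ℂ)).re with hqdef
    have hq : ∀ t ∈ Icc x y, HasDerivAt q
        (((deriv A (t : ℂ)).re * (B (t : ℂ)).re
          - (A (t : ℂ)).re * (deriv B (t : ℂ)).re) / ((B (t : ℂ)).re) ^ 2) t :=
      fun t ht => ((hA _).hasDerivAt.real_of_complex).div
        ((hB _).hasDerivAt.real_of_complex) (hbne t ht)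
    have mono : MonotoneOn q (Icc x y) := by
      apply monotoneOn_of_deriv_nonneg (convex_Icc x y)
      · exact fun t ht => (hq t ht).continuousAt.continuousWithinAt
      · rw [interior_Icc]
        exact fun t ht => (hq t (Ioo_subset_Icc_self ht)).differentiableAt.differentiableWithinAt
      · rw [interior_Icc]
        intro t ht
        rw [(hq t (Ioo_subset_Icc_self ht)).deriv]
        exact div_nonneg (by have := key2 t; linarith) (sq_nonneg _)
    have hqx : q x = 0 := by simp [hqdef, hAx]
    have hqy : q y = 0 := by simp [hqdef, hAy]
    have Azero : ∀ t : ℝ, x < t → t < y → A (t : ℂ) = 0 := by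
      intro t h1 h2
      have ht : t ∈ Icc x y := ⟨le_of_lt h1, le_of_lt h2⟩
      have l1 : q x ≤ q t := mono (left_mem_Icc.mpr (le_of_lt hxy)) ht (le_of_lt h1)
      have l2 : q t ≤ q y := mono ht (right_mem_Icc.mpr (le_of_lt hxy)) (le_of_lt h2)
      have hq0 : q t = 0 := le_antisymm (hqy ▸ l2) (hqx ▸ l1)
      have : (A (t : ℂ)).re = 0 := by
        rcases div_eq_zero_iff.mp hq0 with h | h
        · exact h
        · exact absurd h (hbne t ht)
      rw [Areal t, this]; simp
    exact absurd (HB_entire_eq hA (differentiable_const 0) hxy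
      (fun t h1 h2 => Azero t h1 h2)) (fun h => hA0F h)
  · -- zeros of B interlace with a zero of A
    intro x y hxy hBx hBy
    by_contra hcon
    push_neg at hcon
    have hane : ∀ t ∈ Icc x y, (A (t : ℂ)).re ≠ 0 := by
      intro t ht h0
      have hAt : A (t : ℂ) = 0 := by rw [Areal t, h0]; simp
      rcases eq_or_lt_of_le ht.1 with h | h
      · exact claim3 x ⟨h ▸ hAt, hBx⟩
      rcases eq_or_lt_of_le ht.2 with h' | h'
      · exact claim3 y ⟨h' ▸ hAt, hBy⟩
      · exact hcon t h h' hAt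
    set q : ℝ → ℝ := fun t => (B (t : ℂ)).re / (A (t : ℂ)).re with hqdef
    have hq : ∀ t ∈ Icc x y, HasDerivAt q
        (((deriv B (t : ℂ)).re * (A (t : ℂ)).re
          - (B (t : ℂ)).re * (deriv A (t : ℂ)).re) / ((A (t : ℂ)).re) ^ 2) t :=
      fun t ht => ((hB _).hasDerivAt.real_of_complex).div
        ((hA _).hasDerivAt.real_of_complex) (hane t ht)
    have mono : AntitoneOn q (Icc x y) := by
      apply antitoneOn_of_deriv_nonpos (convex_Icc x y)
      · exact fun t ht => (hq t ht).continuousAt.continuousWithinAt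
      · rw [interior_Icc]
        exact fun t ht => (hq t (Ioo_subset_Icc_self ht)).differentiableAt.differentiableWithinAt
      · rw [interior_Icc]
        intro t ht
        rw [(hq t (Ioo_subset_Icc_self ht)).deriv]
        apply div_nonpos_of_nonpos_of_nonneg _ (sq_nonneg _)
        have := key2 t; nlinarith
    have hqx : q x = 0 := by simp [hqdef, hBx]
    have hqy : q y = 0 := by simp [hqdef, hBy]
    have Bzero : ∀ t : ℝ, x < t → t < y → B (t : ℂ) = 0 := by
      intro t h1 h2
      have ht : t ∈ Icc x y := ⟨le_of_lt h1, le_of_lt h2⟩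
      have l1 : q t ≤ q x := mono (left_mem_Icc.mpr (le_of_lt hxy)) ht (le_of_lt h1)
      have l2 : q y ≤ q t := mono ht (right_mem_Icc.mpr (le_of_lt hxy)) (le_of_lt h2)
      have hq0 : q t = 0 := le_antisymm (hqx ▸ l1) (hqy ▸ l2)
      have : (B (t : ℂ)).re = 0 := by
        rcases div_eq_zero_iff.mp hq0 with h | h
        · exact h
        · exact absurd h (hane t ht)
      rw [Breal t, this]; simp
    exact absurd (HB_entire_eq hB (differentiable_const 0) hxy
      (fun t h1 h2 => Bzero t h1 h2)) (fun h => hB0F h)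
end

section
/- Let $g(z) = \sum_{k\ne 0} \frac{c_k}{z - \pi k}$ where $c_k = C/k + a_k/k$ with $C \in \mathbb{R}$, $\{a_k\} \in \ell^2$, and the series converges locally uniformly off $\pi\mathbb{Z}$. Then for every $\delta > 0$ there exists $R_\delta$ such that $|g(x)| < 1/2$ whenever $x \in \mathbb{R}$, $|x| \ge R_\delta$ and $\operatorname{dist}(x, \pi\mathbb{Z}) \ge \delta$. Consequently, the function $1 + g$ has no real zeros $x$ with $|x| \ge R_\delta$ and $\operatorname{dist}(x, \pi\mathbb{Z}) \ge \delta$. -/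
open Real
lemma amgm_param (t u v : ℝ) (ht : 0 < t) : u * v ≤ (t * u ^ 2 + v ^ 2 / t) / 2 := by
  have heq : (t * u ^ 2 + v ^ 2 / t) / 2 - u * v = (t * u - v) ^ 2 / (2 * t) := by
    field_simp
    ring
  have h4 : 0 ≤ (t * u - v) ^ 2 / (2 * t) := by positivity
  linarith

lemma lattice_sum (δ x : ℝ) (hδ : 0 < δ) (hx : ∀ m : ℤ, δ ≤ |x - π * m|) :
    Summable (fun k : ℤ => 1 / (x - π * k) ^ 2) ∧
    ∑' k : ℤ, 1 / (x - π * k) ^ 2 ≤ 1 / δ ^ 2 + (4 / π ^ 2) * ∑' j : ℤ, 1 / (j : ℝ) ^ 2 := by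
  have hπ : (0:ℝ) < π := Real.pi_pos
  set k0 : ℤ := round (x / π) with hk0
  have hclose : |x - π * k0| ≤ π / 2 := by
    have h1 : |x / π - k0| ≤ 1 / 2 := abs_sub_round (x / π)
    have : x - π * k0 = π * (x / π - k0) := by field_simp
    rw [this, abs_mul, abs_of_pos hπ]
    nlinarith
  set h : ℤ → ℝ := fun j => (if j = 0 then 1 / δ ^ 2 else 0) + (4 / π ^ 2) * (1 / (j : ℝ) ^ 2) with hh
  have hmaj : ∀ j : ℤ, 1 / (x - π * (k0 + j)) ^ 2 ≤ h j := by
    intro j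
    rcases eq_or_ne j 0 with rfl | hj
    · simp only [hh, if_pos rfl]
      have h0 := hx k0
      push_cast
      rw [add_zero]
      have : δ ^ 2 ≤ (x - π * k0) ^ 2 := by
        rw [← sq_abs (x - π * k0)]
        exact pow_le_pow_left₀ hδ.le (hx k0) 2
      have h2 : (0:ℝ) < δ ^ 2 := by positivity
      have := one_div_le_one_div_of_le h2 this
      simp only [Int.cast_zero, ne_eq, OfNat.ofNat_ne_zero, not_false_eq_true, zero_pow,
        div_zero, mul_zero, add_zero]
      linarith [this]
    · simp only [hh, if_neg hj]
      have hj1 : (1:ℝ) ≤ |(j:ℝ)| := by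
        rw [← Int.cast_abs]
        exact_mod_cast Int.one_le_abs hj
      have hd : π * |(j:ℝ)| / 2 ≤ |x - π * (k0 + j)| := by
        have : x - π * (k0 + j) = (x - π * k0) - π * j := by push_cast; ring
        rw [this]
        have h1 : |π * (j:ℝ)| - |x - π * k0| ≤ |x - π * k0 - π * j| := by
          have := abs_sub_abs_le_abs_sub (π * (j:ℝ)) (x - π * k0)
          have h2 : |π * (j:ℝ) - (x - π * k0)| = |x - π * k0 - π * j| := by
            rw [abs_sub_comm]
          linarith [this, h2.le, h2.ge]
        rw [abs_mul, abs_of_pos hπ] at h1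
        nlinarith [hclose]
      have hpos : (0:ℝ) < (π * |(j:ℝ)| / 2) ^ 2 := by positivity
      have hsq : (π * |(j:ℝ)| / 2) ^ 2 ≤ (x - π * (k0 + j)) ^ 2 := by
        rw [← sq_abs (x - π * (k0 + j))]
        exact pow_le_pow_left₀ (by positivity) hd 2
      calc 1 / (x - π * (k0 + j)) ^ 2 ≤ 1 / (π * |(j:ℝ)| / 2) ^ 2 :=
            one_div_le_one_div_of_le hpos hsq
        _ = (4 / π ^ 2) * (1 / (j : ℝ) ^ 2) := by
            rw [div_pow, mul_pow, sq_abs]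
            have hj0 : (j:ℝ) ≠ 0 := Int.cast_ne_zero.mpr hj
            field_simp
            ring
        _ ≤ 0 + (4 / π ^ 2) * (1 / (j : ℝ) ^ 2) := by rw [zero_add]
  have hZsum : Summable (fun j : ℤ => 1 / (j : ℝ) ^ 2) := by
    rw [summable_one_div_int_pow]; norm_num
  have hhs : Summable h := by
    apply Summable.add
    · exact summable_of_ne_finset_zero (s := {0}) (by intro j hj; simp at hj; simp [hj])
    · exact hZsum.mul_left _
  have hnn : ∀ j : ℤ, 0 ≤ 1 / (x - π * (k0 + j)) ^ 2 := fun j => by positivity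
  have hsum' : Summable (fun j : ℤ => 1 / (x - π * (k0 + j)) ^ 2) :=
    Summable.of_nonneg_of_le hnn hmaj hhs
  have e : ℤ ≃ ℤ := Equiv.addLeft k0
  have hkey : Summable (fun k : ℤ => 1 / (x - π * k) ^ 2) := by
    have := (Equiv.addLeft k0).summable_iff
      (f := fun k : ℤ => 1 / (x - π * k) ^ 2)
    rw [← this]
    exact hsum'.congr (fun j => by simp [Equiv.addLeft])
  refine ⟨hkey, ?_⟩
  have htsum_eq : ∑' k : ℤ, 1 / (x - π * k) ^ 2 = ∑' j : ℤ, 1 / (x - π * (k0 + j)) ^ 2 := by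
    rw [← (Equiv.addLeft k0).tsum_eq (f := fun k : ℤ => 1 / (x - π * k) ^ 2)]
    exact tsum_congr (fun j => by simp [Equiv.addLeft])
  rw [htsum_eq]
  have h1 : ∑' j : ℤ, 1 / (x - π * (k0 + j)) ^ 2 ≤ ∑' j, h j :=
    Summable.tsum_le_tsum hmaj hsum' hhs
  have h2 : ∑' j, h j = 1 / δ ^ 2 + (4 / π ^ 2) * ∑' j : ℤ, 1 / (j : ℝ) ^ 2 := by
    rw [hh, Summable.tsum_add (summable_of_ne_finset_zero (s := {0})
      (by intro j hj; simp at hj; simp [hj])) (hZsum.mul_left _), tsum_ite_eq, tsum_mul_left]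
  linarith [h1, h2.le, h2.ge]

set_option maxHeartbeats 1000000 in
theorem stmt_14 (c a : ℤ → ℝ) (C : ℝ)
    (hc : ∀ k : ℤ, k ≠ 0 → c k = C / k + a k / k)
    (ha : Summable (fun k => (a k) ^ 2))
    (hconv : ∀ x : ℝ, (∀ m : ℤ, x ≠ π * m) →
      Summable (fun k : {k : ℤ // k ≠ 0} => c k / (x - π * (k : ℤ)))) :
    ∀ δ : ℝ, 0 < δ → ∃ R : ℝ, ∀ x : ℝ, R ≤ |x| →
      (∀ m : ℤ, δ ≤ |x - π * m|) →
      |∑' k : {k : ℤ // k ≠ 0}, c k / (x - π * (k : ℤ))| < 1 / 2 ∧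
      1 + ∑' k : {k : ℤ // k ≠ 0}, c k / (x - π * (k : ℤ)) ≠ 0 := by
  intro δ hδ
  have hπ : (0:ℝ) < π := Real.pi_pos
  classical
  set S := {k : ℤ // k ≠ 0}
  -- bound on a
  set A : ℝ := Real.sqrt (∑' k, (a k) ^ 2) with hA_def
  have hA0 : 0 ≤ A := Real.sqrt_nonneg _
  have hA : ∀ k : ℤ, |a k| ≤ A := by
    intro k
    have h1 : (a k) ^ 2 ≤ ∑' k, (a k) ^ 2 :=
      Summable.le_tsum ha k (fun j _ => sq_nonneg _)
    have := Real.sqrt_le_sqrt h1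
    rwa [Real.sqrt_sq_eq_abs] at this
  set M : ℝ := |C| + A + 1 with hM_def
  have hM0 : 0 < M := by positivity
  have hc' : ∀ k : ℤ, k ≠ 0 → |c k| ≤ M / |(k:ℝ)| := by
    intro k hk
    have hk0 : ((k:ℝ)) ≠ 0 := Int.cast_ne_zero.mpr hk
    rw [hc k hk, ← add_div, abs_div]
    have h1 : |C + a k| ≤ M := by
      calc |C + a k| ≤ |C| + |a k| := abs_add_le _ _
        _ ≤ |C| + A := by linarith [hA k]
        _ ≤ M := by rw [hM_def]; linarith
    have h2 : (0:ℝ) < |(k:ℝ)| := abs_pos.mpr hk0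
    gcongr
  -- constants
  set Z : ℝ := ∑' j : ℤ, 1 / (j : ℝ) ^ 2 with hZ_def
  have hZsum : Summable (fun j : ℤ => 1 / (j : ℝ) ^ 2) := by
    rw [summable_one_div_int_pow]; norm_num
  have hZ0 : 0 ≤ Z := tsum_nonneg (fun j => by positivity)
  set B : ℝ := 1 / δ ^ 2 + (4 / π ^ 2) * Z with hB_def
  have hB0 : 0 < B := by positivity
  set t : ℝ := 4 * B with ht_def
  have ht0 : 0 < t := by positivity
  -- the quadratic majorant
  set q : ℤ → ℝ := fun k => M ^ 2 * (1 / (k : ℝ) ^ 2) with hq_def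
  have hq : Summable q := hZsum.mul_left _
  have hqS : Summable (fun k : S => q k) := hq.subtype _
  have hq0 : ∀ k : ℤ, 0 ≤ q k := fun k => by positivity
  -- choose the finset
  have htail := tendsto_tsum_compl_atTop_zero (fun k : S => q k)
  have hev : ∀ᶠ s : Finset S in Filter.atTop,
      (∑' k : {y : S // y ∉ s}, q k) < 1 / (16 * B) := by
    have hpos : (0:ℝ) < 1 / (16 * B) := by positivity
    exact (tendsto_order.1 htail).2 _ hpos
  obtain ⟨s, hs⟩ := hev.exists
  -- bound on the finset indices
  set N : ℕ := s.sup (fun y => (y : ℤ).natAbs) with hN_def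
  have hN : ∀ y ∈ s, |((y : ℤ) : ℝ)| ≤ (N : ℝ) := by
    intro y hy
    have h1 : (y : ℤ).natAbs ≤ N := Finset.le_sup (f := fun y : S => (y:ℤ).natAbs) hy
    calc |((y : ℤ) : ℝ)| = ((y : ℤ).natAbs : ℝ) := by rw [Nat.cast_natAbs, Int.cast_abs]
      _ ≤ (N : ℝ) := by exact_mod_cast h1
  set cM : ℝ := (s.card : ℝ) * M with hcM_def
  have hcM0 : 0 ≤ cM := by positivity
  refine ⟨π * N + 8 * cM + 1, ?_⟩
  intro x hxR hxδ
  -- basic facts about x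
  have hden : ∀ k : ℤ, 0 < |x - π * k| := fun k => lt_of_lt_of_le hδ (hxδ k)
  obtain ⟨hLsum, hLle⟩ := lattice_sum δ x hδ hxδ
  set L : ℤ → ℝ := fun k => 1 / (x - π * k) ^ 2 with hL_def
  have hL0 : ∀ k : ℤ, 0 ≤ L k := fun k => by positivity
  set F : S → ℝ := fun k => c k / (x - π * (k : ℤ)) with hF_def
  -- pointwise bounds
  have hFabs : ∀ k : S, |F k| ≤ (t / 2) * q k + (1 / (2 * t)) * L k := by
    intro k
    have hk : (k : ℤ) ≠ 0 := k.2
    have hk0 : (((k : ℤ)):ℝ) ≠ 0 := Int.cast_ne_zero.mpr hk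
    have h1 : |F k| = |c k| / |x - π * (k:ℤ)| := by rw [hF_def]; exact abs_div _ _
    have h2 : |c k| / |x - π * (k:ℤ)| ≤ (M / |((k:ℤ):ℝ)|) * (1 / |x - π * (k:ℤ)|) := by
      rw [mul_one_div]
      have := hden (k:ℤ)
      gcongr
      exact hc' k hk
    have h3 := amgm_param t (M / |((k:ℤ):ℝ)|) (1 / |x - π * (k:ℤ)|) ht0
    have h4 : (M / |((k:ℤ):ℝ)|) ^ 2 = q (k:ℤ) := by
      rw [hq_def, div_pow, sq_abs]; ring
    have h5 : (1 / |x - π * (k:ℤ)|) ^ 2 = L (k:ℤ) := by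
      rw [hL_def, div_pow, sq_abs, one_pow]
    rw [h4, h5] at h3
    calc |F k| = |c k| / |x - π * (k:ℤ)| := h1
      _ ≤ (M / |((k:ℤ):ℝ)|) * (1 / |x - π * (k:ℤ)|) := h2
      _ ≤ (t * q (k:ℤ) + L (k:ℤ) / t) / 2 := h3
      _ = (t / 2) * q (k:ℤ) + (1 / (2 * t)) * L (k:ℤ) := by field_simp
  have hRHSsum : Summable (fun k : S => (t / 2) * q k + (1 / (2 * t)) * L k) :=
    ((hq.subtype _).mul_left _).add ((hLsum.subtype _).mul_left _)
  have hFa : Summable (fun k : S => |F k|) :=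
    Summable.of_nonneg_of_le (fun k => abs_nonneg _) hFabs hRHSsum
  -- region A bound
  have hxN : π * N + 8 * cM + 1 ≤ |x| := hxR
  have hregA : ∑ k ∈ s, |F k| < 1 / 8 := by
    have hbound : ∀ k ∈ s, |F k| ≤ M / (|x| - π * N) := by
      intro k hk
      have hkz : (k : ℤ) ≠ 0 := k.2
      have hk0 : (((k:ℤ)):ℝ) ≠ 0 := Int.cast_ne_zero.mpr hkz
      have hk1 : (1:ℝ) ≤ |((k:ℤ):ℝ)| := by
        rw [← Int.cast_abs]; exact_mod_cast Int.one_le_abs hkz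
      have hdist : |x| - π * N ≤ |x - π * (k:ℤ)| := by
        have h1 : |x| - |π * ((k:ℤ):ℝ)| ≤ |x - π * (k:ℤ)| := by
          have := abs_sub_abs_le_abs_sub x (π * ((k:ℤ):ℝ))
          linarith
        have h2 : |π * ((k:ℤ):ℝ)| ≤ π * N := by
          rw [abs_mul, abs_of_pos hπ]
          exact mul_le_mul_of_nonneg_left (hN k hk) hπ.le
        linarith
      have hpos : (0:ℝ) < |x| - π * N := by nlinarith [hcM0]
      have h3 : |c k| ≤ M := by
        calc |c k| ≤ M / |((k:ℤ):ℝ)| := hc' k hkz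
          _ ≤ M / 1 := by
            apply div_le_div_of_nonneg_left hM0.le ?_ hk1
            norm_num
          _ = M := div_one M
      calc |F k| = |c k| / |x - π * (k:ℤ)| := abs_div _ _
        _ ≤ M / (|x| - π * N) := div_le_div₀ hM0.le h3 hpos hdist
    calc ∑ k ∈ s, |F k| ≤ ∑ k ∈ s, M / (|x| - π * N) := Finset.sum_le_sum hbound
      _ = cM / (|x| - π * N) := by
        rw [Finset.sum_const, nsmul_eq_mul, hcM_def, mul_div_assoc]
      _ < 1 / 8 := by
        have hpos : (0:ℝ) < |x| - π * N := by nlinarith [hcM0]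
        rw [div_lt_div_iff₀ hpos (by norm_num : (0:ℝ) < 8)]
        nlinarith [hcM0]
  -- region B bound
  have hregB : ∑' k : {y : S // y ∉ s}, |F k| < 1 / 4 := by
    have h1 : ∑' k : {y : S // y ∉ s}, |F k|
        ≤ ∑' k : {y : S // y ∉ s}, ((t / 2) * q k + (1 / (2 * t)) * L k) :=
      Summable.tsum_le_tsum (fun k => hFabs k) (hFa.subtype _) (hRHSsum.subtype _)
    have h2 : ∑' k : {y : S // y ∉ s}, ((t / 2) * q (k:S) + (1 / (2 * t)) * L ((k:S):ℤ))
        = (t / 2) * (∑' k : {y : S // y ∉ s}, q (k:S))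
          + (1 / (2 * t)) * (∑' k : {y : S // y ∉ s}, L ((k:S):ℤ)) := by
      have hq2 : Summable (fun k : {y : S // y ∉ s} => q ((k:S):ℤ)) := hqS.subtype _
      have hL2 : Summable (fun k : {y : S // y ∉ s} => L ((k:S):ℤ)) :=
        (hLsum.subtype _).subtype _
      rw [Summable.tsum_add (hq2.mul_left _) (hL2.mul_left _), tsum_mul_left, tsum_mul_left, tsum_mul_left]
    have h3 : ∑' k : {y : S // y ∉ s}, L ((k:S):ℤ) ≤ ∑' k : ℤ, L k := by
      apply Summable.tsum_le_tsum_of_inj (fun k : {y : S // y ∉ s} => ((k : S) : ℤ))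
      · intro p p' hpp'
        exact Subtype.ext (Subtype.ext hpp')
      · intro k _; exact hL0 k
      · intro k; exact le_rfl
      · exact (hLsum.subtype _).subtype _
      · exact hLsum
      
    have h4 : ∑' k : ℤ, L k ≤ B := hLle
    have h5 : (∑' k : {y : S // y ∉ s}, q (k:S)) < 1 / (16 * B) := hs
    have h6 : 0 ≤ ∑' k : {y : S // y ∉ s}, q (k:S) :=
      tsum_nonneg (fun k => hq0 _)
    have key : (t / 2) * (∑' k : {y : S // y ∉ s}, q (k:S))
          + (1 / (2 * t)) * (∑' k : {y : S // y ∉ s}, L ((k:S):ℤ)) < 1 / 4 := by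
      have e1 : (t / 2) * (∑' k : {y : S // y ∉ s}, q (k:S)) < (t/2) * (1/(16*B)) :=
        mul_lt_mul_of_pos_left h5 (by positivity)
      have e2 : (1 / (2 * t)) * (∑' k : {y : S // y ∉ s}, L ((k:S):ℤ))
          ≤ (1 / (2 * t)) * B := by
        apply mul_le_mul_of_nonneg_left (h3.trans h4) (by positivity)
      have e3 : (t/2) * (1/(16*B)) = 1/8 := by
        rw [ht_def]; field_simp; ring
      have e4 : (1 / (2 * t)) * B = 1/8 := by
        rw [ht_def]; field_simp; ring
      linarith
    linarith [h1, h2.le, key]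
  -- combine
  have hsplit : ∑ k ∈ s, |F k| + ∑' k : {y : S // y ∉ s}, |F k| = ∑' k : S, |F k| :=
    Summable.sum_add_tsum_subtype_compl hFa s
  have habs : |∑' k : S, F k| ≤ ∑' k : S, |F k| := by
    have := norm_tsum_le_tsum_norm (f := F) (by simpa [Real.norm_eq_abs] using hFa)
    simpa [Real.norm_eq_abs] using this
  have hmain : |∑' k : S, F k| < 1 / 2 := by
    have : ∑' k : S, |F k| < 1/8 + 1/4 := by linarith [hregA, hregB, hsplit]
    linarith [habs]
  constructor
  · exact hmain
  · intro hzero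
    have : ∑' k : S, F k = -1 := by linarith [hzero]
    rw [this] at hmain
    norm_num at hmain
end
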